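/- arXiv:1605.05196 — 4 statements merged into one kernel-verified Lean document; each statement's English description precedes it below -/
import Mathlib

section
/- Let b ∈ ℝ^d and let μ be a finite positive Borel measure on ℝ^d with compact support and μ({b}) = 0. Let 0 < s < d and ε > 0, and set E = {a ∈ ℝ^d : |a-b|^s · ∫ |x-a|^{-s} dμ(x) ≥ ε}. Then E has Lebesgue density zero at b. -/
open MeasureTheory Metric Filter ENNReal

/-- `E` has Lebesgue density zero at `b`. -/
def DensityZeroAt (d : ℕ) (E : Set (EuclideanSpace ℝ (Fin d)))
    (b : EuclideanSpace ℝ (Fin d)) : Prop :=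
  Tendsto (fun r : ℝ => volume (E ∩ closedBall b r) / ENNReal.ofReal (r ^ d))
    (nhdsWithin 0 (Set.Ioi 0)) (nhds 0)

private lemma rpow_neg_anti {t u s : ℝ} (ht : 0 < t) (h : t ≤ u) (hs : 0 ≤ s) :
    ENNReal.ofReal u ^ (-s) ≤ ENNReal.ofReal t ^ (-s) := by
  rw [ENNReal.ofReal_rpow_of_pos (ht.trans_le h), ENNReal.ofReal_rpow_of_pos ht]
  exact ENNReal.ofReal_le_ofReal (Real.rpow_le_rpow_of_nonpos ht h (neg_nonpos.2 hs))

private lemma real_calc {ρ s : ℝ} (hρ : 0 < ρ) (d k : ℕ) :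
    (ρ / 2 ^ (k + 1)) ^ (-s) * (ρ / 2 ^ k) ^ d
      = ρ ^ ((d : ℝ) - s) * 2 ^ s * ((2 : ℝ) ^ (s - (d : ℝ))) ^ k := by
  have h1 : (0:ℝ) < (ρ / 2 ^ (k + 1)) ^ (-s) * (ρ / 2 ^ k) ^ d := by positivity
  have h2 : (0:ℝ) < ρ ^ ((d : ℝ) - s) * 2 ^ s * ((2 : ℝ) ^ (s - (d : ℝ))) ^ k := by positivity
  have hlog : Real.log ((ρ / 2 ^ (k + 1)) ^ (-s) * (ρ / 2 ^ k) ^ d)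
      = Real.log (ρ ^ ((d : ℝ) - s) * 2 ^ s * ((2 : ℝ) ^ (s - (d : ℝ))) ^ k) := by
    rw [Real.log_mul (by positivity) (by positivity), Real.log_mul (by positivity) (by positivity),
      Real.log_mul (by positivity) (by positivity),
      Real.log_rpow (by positivity), Real.log_pow, Real.log_pow,
      Real.log_rpow hρ, Real.log_rpow two_pos, Real.log_rpow two_pos,
      Real.log_div hρ.ne' (by positivity), Real.log_div hρ.ne' (by positivity),
      Real.log_pow, Real.log_pow]
    push_cast
    ring
  calc (ρ / 2 ^ (k + 1)) ^ (-s) * (ρ / 2 ^ k) ^ d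
      = Real.exp (Real.log ((ρ / 2 ^ (k + 1)) ^ (-s) * (ρ / 2 ^ k) ^ d)) := (Real.exp_log h1).symm
    _ = Real.exp (Real.log (ρ ^ ((d : ℝ) - s) * 2 ^ s * ((2 : ℝ) ^ (s - (d : ℝ))) ^ k)) := by
        rw [hlog]
    _ = _ := Real.exp_log h2

private lemma riesz_ball_bound (d : ℕ) (s : ℝ) (hs0 : 0 < s) (hsd : s < d) :
    ∃ C : ℝ≥0∞, C ≠ ∞ ∧ ∀ (x : EuclideanSpace ℝ (Fin d)) (ρ : ℝ), 0 < ρ →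
      ∫⁻ a in closedBall x ρ, (ENNReal.ofReal (dist x a)) ^ (-s) ≤
        C * (ENNReal.ofReal ρ) ^ ((d : ℝ) - s) := by
  have hd0 : (0:ℝ) < d := hs0.trans hsd
  have hdne : d ≠ 0 := by exact_mod_cast (Nat.cast_pos.1 hd0).ne'
  set B : ℝ≥0∞ := volume (ball (0 : EuclideanSpace ℝ (Fin d)) 1) with hBdef
  have hBfin : B ≠ ∞ := measure_ball_lt_top.ne
  have hqlt : (2:ℝ) ^ (s - (d:ℝ)) < 1 :=
    Real.rpow_lt_one_of_one_lt_of_neg one_lt_two (by linarith)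
  have hqlt' : ENNReal.ofReal ((2:ℝ) ^ (s - (d:ℝ))) < 1 := ENNReal.ofReal_lt_one.2 hqlt
  refine ⟨ENNReal.ofReal ((2:ℝ) ^ s) * B * (1 - ENNReal.ofReal ((2:ℝ) ^ (s - (d:ℝ))))⁻¹, ?_, ?_⟩
  · exact ENNReal.mul_ne_top (ENNReal.mul_ne_top ENNReal.ofReal_ne_top hBfin)
      (ENNReal.inv_ne_top.2 (tsub_pos_of_lt hqlt').ne')
  intro x ρ hρ
  set f : EuclideanSpace ℝ (Fin d) → ℝ≥0∞ := fun a => (ENNReal.ofReal (dist x a)) ^ (-s)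
    with hfdef
  set A : ℕ → Set (EuclideanSpace ℝ (Fin d)) :=
    fun k => closedBall x (ρ / 2 ^ k) \ closedBall x (ρ / 2 ^ (k + 1)) with hAdef
  -- covering
  have hcover : closedBall x ρ ⊆ {x} ∪ ⋃ k : ℕ, A k := by
    intro a ha
    rcases eq_or_ne a x with rfl | hax
    · exact Or.inl rfl
    have hda : 0 < dist a x := dist_pos.2 hax
    have hex : ∃ k : ℕ, ρ / 2 ^ (k + 1) < dist a x := by
      obtain ⟨n, hn⟩ := exists_nat_gt (ρ / dist a x)
      refine ⟨n, ?_⟩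
      rw [div_lt_iff₀ (by positivity)]
      rw [div_lt_iff₀ hda] at hn
      have h2 : (n:ℝ) ≤ 2 ^ (n + 1) := by
        calc (n:ℝ) ≤ 2 ^ n := by exact_mod_cast (Nat.lt_two_pow_self (n := n)).le
          _ ≤ 2 ^ (n + 1) := by
              have : (1:ℝ) ≤ 2 := one_le_two
              calc (2:ℝ) ^ n = 2 ^ n * 1 := (mul_one _).symm
                _ ≤ 2 ^ n * 2 := by nlinarith [pow_pos (two_pos (α := ℝ)) n]
                _ = 2 ^ (n + 1) := (pow_succ 2 n).symm
      nlinarith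
    refine Or.inr (Set.mem_iUnion.2 ⟨Nat.find hex, ?_, ?_⟩)
    · -- a ∈ closedBall x (ρ / 2 ^ k)
      rcases Nat.eq_zero_or_pos (Nat.find hex) with h0 | hpos
      · rw [h0]
        simpa using ha
      · obtain ⟨m, hm⟩ := Nat.exists_eq_succ_of_ne_zero hpos.ne'
        have hmin := Nat.find_min hex (m := m) (by omega)
        push_neg at hmin
        rw [hm]
        exact mem_closedBall.2 hmin
    · intro hmem
      exact absurd (mem_closedBall.1 hmem) (not_le.2 (Nat.find_spec hex))
  have hsingle : ∫⁻ a in ({x} : Set (EuclideanSpace ℝ (Fin d))), f a = 0 := by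
    apply setLIntegral_measure_zero
    rw [← closedBall_zero (x := x), Measure.addHaar_closedBall volume x le_rfl,
      finrank_euclideanSpace_fin, zero_pow hdne]
    simp
  calc ∫⁻ a in closedBall x ρ, f a
      ≤ ∫⁻ a in ({x} ∪ ⋃ k : ℕ, A k : Set (EuclideanSpace ℝ (Fin d))), f a :=
        lintegral_mono_set hcover
    _ ≤ (∫⁻ a in ({x} : Set (EuclideanSpace ℝ (Fin d))), f a) + ∫⁻ a in ⋃ k : ℕ, A k, f a :=
        lintegral_union_le _ _ _
    _ = ∫⁻ a in ⋃ k : ℕ, A k, f a := by rw [hsingle, zero_add]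
    _ ≤ ∑' k : ℕ, ∫⁻ a in A k, f a := lintegral_iUnion_le _ _
    _ ≤ ∑' k : ℕ, ENNReal.ofReal ((ρ / 2 ^ (k + 1)) ^ (-s) * (ρ / 2 ^ k) ^ d) * B := by
        refine ENNReal.tsum_le_tsum fun k => ?_
        have hk1 : (0:ℝ) < ρ / 2 ^ (k + 1) := by positivity
        calc ∫⁻ a in A k, f a
            ≤ ∫⁻ _a in A k, ENNReal.ofReal ((ρ / 2 ^ (k + 1)) ^ (-s)) := by
              refine setLIntegral_mono' (measurableSet_closedBall.diff measurableSet_closedBall)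
                fun a hak => ?_
              have h1 : ρ / 2 ^ (k + 1) < dist a x := by
                by_contra hcon
                exact hak.2 (mem_closedBall.2 (not_lt.1 hcon))
              rw [hfdef]
              simp only []
              rw [dist_comm x a, ← ENNReal.ofReal_rpow_of_pos hk1]
              exact rpow_neg_anti hk1 h1.le hs0.le
          _ = ENNReal.ofReal ((ρ / 2 ^ (k + 1)) ^ (-s)) * volume (A k) :=
              setLIntegral_const _ _
          _ ≤ ENNReal.ofReal ((ρ / 2 ^ (k + 1)) ^ (-s)) * volume (closedBall x (ρ / 2 ^ k)) :=
              mul_le_mul_right (measure_mono Set.diff_subset) _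
          _ = ENNReal.ofReal ((ρ / 2 ^ (k + 1)) ^ (-s)) *
                (ENNReal.ofReal ((ρ / 2 ^ k) ^ d) * B) := by
              rw [Measure.addHaar_closedBall volume x (by positivity), finrank_euclideanSpace_fin]
          _ = ENNReal.ofReal ((ρ / 2 ^ (k + 1)) ^ (-s) * (ρ / 2 ^ k) ^ d) * B := by
              rw [ENNReal.ofReal_mul (Real.rpow_nonneg hk1.le _), mul_assoc]
    _ = ∑' k : ℕ, ENNReal.ofReal (ρ ^ ((d : ℝ) - s) * 2 ^ s) * B *
          (ENNReal.ofReal ((2:ℝ) ^ (s - (d:ℝ)))) ^ k := by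
        refine tsum_congr fun k => ?_
        rw [real_calc hρ d k, ENNReal.ofReal_mul (by positivity),
          ENNReal.ofReal_pow (by positivity)]
        ring
    _ = ENNReal.ofReal (ρ ^ ((d : ℝ) - s) * 2 ^ s) * B *
          (1 - ENNReal.ofReal ((2:ℝ) ^ (s - (d:ℝ))))⁻¹ := by
        rw [ENNReal.tsum_mul_left, ENNReal.tsum_geometric]
    _ = ENNReal.ofReal ((2:ℝ) ^ s) * B * (1 - ENNReal.ofReal ((2:ℝ) ^ (s - (d:ℝ))))⁻¹ *
          ENNReal.ofReal ρ ^ ((d : ℝ) - s) := by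
        rw [ENNReal.ofReal_mul (by positivity), ENNReal.ofReal_rpow_of_pos hρ]
        ring

/-- if μ is a finite positive measure with compact support and no
mass at b, 0 < s < d, ε > 0, then
E = {a : |a-b|^s ∫ |x-a|^{-s} dμ(x) ≥ ε} has Lebesgue density zero at b. -/
theorem riesz_potential_density_zero (d : ℕ) (b : EuclideanSpace ℝ (Fin d))
    (μ : Measure (EuclideanSpace ℝ (Fin d))) [IsFiniteMeasure μ]
    (hK : ∃ K, IsCompact K ∧ μ Kᶜ = 0) (hb : μ {b} = 0)
    (s : ℝ) (hs0 : 0 < s) (hsd : s < d) (ε : ℝ) (hε : 0 < ε) :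
    DensityZeroAt d
      {a | ENNReal.ofReal ε ≤ (ENNReal.ofReal (dist a b)) ^ s *
        ∫⁻ x, (ENNReal.ofReal (dist x a)) ^ (-s) ∂μ} b := by
  classical
  have hd0 : (0:ℝ) < d := hs0.trans hsd
  obtain ⟨C, hCfin, hC⟩ := riesz_ball_bound d s hs0 hsd
  set B : ℝ≥0∞ := volume (ball (0 : EuclideanSpace ℝ (Fin d)) 1) with hBdef
  have hBfin : B ≠ ∞ := measure_ball_lt_top.ne
  have hBpos : B ≠ 0 := (measure_ball_pos volume 0 one_pos).ne'
  set C₂ : ℝ≥0∞ := C * ENNReal.ofReal ((2:ℝ) ^ ((d:ℝ) - s)) + B with hC2def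
  have hC2fin : C₂ ≠ ∞ := by
    rw [hC2def]
    exact ENNReal.add_ne_top.2 ⟨ENNReal.mul_ne_top hCfin ENNReal.ofReal_ne_top, hBfin⟩
  have hC2pos : C₂ ≠ 0 := by
    rw [hC2def]
    intro h
    exact hBpos (by simpa using (add_eq_zero.1 h).2)
  set E : Set (EuclideanSpace ℝ (Fin d)) :=
    {a | ENNReal.ofReal ε ≤ (ENNReal.ofReal (dist a b)) ^ s *
      ∫⁻ x, (ENNReal.ofReal (dist x a)) ^ (-s) ∂μ} with hEdef
  rw [DensityZeroAt, ENNReal.tendsto_nhds_zero]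
  intro η hη
  set e : ℝ≥0∞ := ENNReal.ofReal (ε / 2) with hedef
  have hepos : e ≠ 0 := by
    rw [hedef]
    simpa [ENNReal.ofReal_eq_zero] using by linarith
  have hefin : e ≠ ∞ := ENNReal.ofReal_ne_top
  -- choose δ with C₂ * μ (ball b δ) ≤ η * e
  have hδex : ∃ δ : ℝ, 0 < δ ∧ C₂ * μ (ball b δ) ≤ η * e := by
    set θ : ℝ≥0∞ := η * e / C₂ with hθdef
    have hθpos : 0 < θ := ENNReal.div_pos (by simp [hη.ne', hepos]) hC2fin
    have hiInter : ⋂ n : ℕ, closedBall b (1 / (n + 1)) = {b} := by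
      apply Set.Subset.antisymm
      · intro y hy
        simp only [Set.mem_iInter, mem_closedBall] at hy
        have hy0 : dist y b ≤ 0 := by
          by_contra hcon
          obtain ⟨n, hn⟩ := exists_nat_one_div_lt (not_le.1 hcon)
          exact absurd (hy n) (not_le.2 hn)
        simpa using le_antisymm hy0 dist_nonneg
      · intro y hy
        simp only [Set.mem_singleton_iff] at hy
        subst hy
        simp only [Set.mem_iInter, mem_closedBall, dist_self]
        intro n
        positivity
    have htend : Tendsto (fun n : ℕ => μ (closedBall b (1 / (n + 1)))) atTop (nhds 0) := by
      have := tendsto_measure_iInter_atTop (μ := μ)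
        (s := fun n : ℕ => closedBall b (1 / (n + 1)))
        (fun n => measurableSet_closedBall.nullMeasurableSet)
        (fun n m hnm => closedBall_subset_closedBall (by
          apply one_div_le_one_div_of_le
          · positivity
          · exact_mod_cast Nat.add_le_add_right hnm 1))
        ⟨0, measure_ne_top μ _⟩
      rw [hiInter, hb] at this
      exact this
    obtain ⟨n, hn⟩ := (htend.eventually_lt_const hθpos).exists
    refine ⟨1 / (n + 1), by positivity, ?_⟩
    have h1 : μ (ball b (1 / (n + 1))) ≤ θ :=
      le_trans (measure_mono ball_subset_closedBall) hn.le
    calc C₂ * μ (ball b (1 / (n + 1))) ≤ C₂ * θ := mul_le_mul_right h1 _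
      _ ≤ η * e := ENNReal.mul_div_le
  obtain ⟨δ, hδ0, hδμ⟩ := hδex
  set M : ℝ≥0∞ := μ Set.univ with hMdef
  have hδ2 : (0:ℝ) < δ / 2 := by positivity
  set G : ℝ≥0∞ := ENNReal.ofReal (δ / 2) ^ (-s) * M with hGdef
  have hGfin : G ≠ ∞ := by
    rw [hGdef, ENNReal.ofReal_rpow_of_pos hδ2]
    exact ENNReal.mul_ne_top ENNReal.ofReal_ne_top (measure_ne_top μ _)
  -- far field eventually small
  have hfar : ∀ᶠ r in nhdsWithin 0 (Set.Ioi 0),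
      ENNReal.ofReal r ^ s * G < e := by
    have h1 : Tendsto (fun r : ℝ => ENNReal.ofReal r) (nhdsWithin 0 (Set.Ioi 0)) (nhds 0) :=
      (ENNReal.continuous_ofReal.tendsto' 0 0 (by simp)).mono_left nhdsWithin_le_nhds
    have h2 : Tendsto (fun r : ℝ => ENNReal.ofReal r ^ s) (nhdsWithin 0 (Set.Ioi 0)) (nhds 0) := by
      have hc : Continuous fun y : ℝ≥0∞ => y ^ s := ENNReal.continuous_rpow_const
      have := (hc.tendsto 0).comp h1
      simpa [Function.comp_def, ENNReal.zero_rpow_of_pos hs0] using this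
    have h3 := ENNReal.Tendsto.mul_const h2 (Or.inr hGfin)
    rw [zero_mul] at h3
    exact h3.eventually_lt_const (pos_iff_ne_zero.2 hepos)
  -- continuity of the kernel
  have hcont : Continuous fun p : EuclideanSpace ℝ (Fin d) × EuclideanSpace ℝ (Fin d) =>
      ENNReal.ofReal (dist p.2 p.1) ^ (-s) :=
    ENNReal.continuous_rpow_const.comp (ENNReal.continuous_ofReal.comp
      (continuous_dist.comp (continuous_snd.prodMk continuous_fst)))
  set g : EuclideanSpace ℝ (Fin d) → ℝ≥0∞ :=
    fun a => ∫⁻ x in ball b δ, ENNReal.ofReal (dist x a) ^ (-s) ∂μ with hgdef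
  have hgmeas : Measurable g := by
    apply Measurable.lintegral_prod_right (f := fun a x => ENNReal.ofReal (dist x a) ^ (-s))
    exact hcont.measurable
  filter_upwards [hfar, self_mem_nhdsWithin,
    Ioo_mem_nhdsGT_of_mem (Set.mem_Ico.2 ⟨le_refl (0:ℝ), hδ2⟩)] with r hfarr hr0 hrδ
  have hr : (0:ℝ) < r := hr0
  have hrδ2 : r < δ / 2 := hrδ.2
  set c : ℝ≥0∞ := (ENNReal.ofReal r ^ s)⁻¹ * e with hcdef
  have hrs0 : ENNReal.ofReal r ^ s ≠ 0 := by
    rw [ENNReal.ofReal_rpow_of_pos hr]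
    simpa [ENNReal.ofReal_eq_zero] using by positivity
  have hrsfin : ENNReal.ofReal r ^ s ≠ ∞ :=
    ENNReal.rpow_ne_top_of_nonneg hs0.le ENNReal.ofReal_ne_top
  -- Step 1 : E ∩ closedBall b r ⊆ {a | c ≤ g a}
  have hEsub : E ∩ closedBall b r ⊆ {a | c ≤ g a} := by
    rintro a ⟨haE, har⟩
    have hsplit : (∫⁻ x, ENNReal.ofReal (dist x a) ^ (-s) ∂μ)
        = g a + ∫⁻ x in (ball b δ)ᶜ, ENNReal.ofReal (dist x a) ^ (-s) ∂μ :=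
      (lintegral_add_compl _ measurableSet_ball).symm
    have hfarbound : ∫⁻ x in (ball b δ)ᶜ, ENNReal.ofReal (dist x a) ^ (-s) ∂μ ≤ G := by
      calc ∫⁻ x in (ball b δ)ᶜ, ENNReal.ofReal (dist x a) ^ (-s) ∂μ
          ≤ ∫⁻ _x in (ball b δ)ᶜ, ENNReal.ofReal (δ / 2) ^ (-s) ∂μ := by
            refine setLIntegral_mono' measurableSet_ball.compl fun x hx => ?_
            have h1 : δ ≤ dist x b := by
              by_contra hcon
              exact hx (mem_ball.2 (not_le.1 hcon))
            have h2 : dist a b ≤ r := mem_closedBall.1 har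
            have h3 : δ / 2 ≤ dist x a := by
              have ht := dist_triangle x a b
              linarith
            exact rpow_neg_anti hδ2 h3 hs0.le
        _ = ENNReal.ofReal (δ / 2) ^ (-s) * μ ((ball b δ)ᶜ) := setLIntegral_const _ _
        _ ≤ G := by
            rw [hGdef]
            exact mul_le_mul_right (measure_mono (Set.subset_univ _)) _
    have hdab : (ENNReal.ofReal (dist a b)) ^ s ≤ ENNReal.ofReal r ^ s :=
      ENNReal.rpow_le_rpow (ENNReal.ofReal_le_ofReal (mem_closedBall.1 har)) hs0.le
    have hchain : ENNReal.ofReal ε ≤ ENNReal.ofReal r ^ s * g a + e := by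
      calc ENNReal.ofReal ε
          ≤ (ENNReal.ofReal (dist a b)) ^ s *
              (g a + ∫⁻ x in (ball b δ)ᶜ, ENNReal.ofReal (dist x a) ^ (-s) ∂μ) := by
            rw [← hsplit]; exact haE
        _ ≤ ENNReal.ofReal r ^ s * (g a + G) := by
            exact mul_le_mul' hdab (add_le_add_right hfarbound _)
        _ = ENNReal.ofReal r ^ s * g a + ENNReal.ofReal r ^ s * G := mul_add _ _ _
        _ ≤ ENNReal.ofReal r ^ s * g a + e := add_le_add_right hfarr.le _
    have hsub2 : e ≤ ENNReal.ofReal r ^ s * g a := by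
      have heq : ENNReal.ofReal ε - e = e := by
        rw [hedef, ← ENNReal.ofReal_sub _ (by linarith)]
        congr 1
        ring
      calc e = ENNReal.ofReal ε - e := heq.symm
        _ ≤ ENNReal.ofReal r ^ s * g a := tsub_le_iff_right.2 hchain
    show c ≤ g a
    calc c = (ENNReal.ofReal r ^ s)⁻¹ * e := hcdef
      _ ≤ (ENNReal.ofReal r ^ s)⁻¹ * (ENNReal.ofReal r ^ s * g a) := mul_le_mul_right hsub2 _
      _ = g a := by rw [← mul_assoc, ENNReal.inv_mul_cancel hrs0 hrsfin, one_mul]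
  -- Step 2 : Tonelli bound
  have hinner : ∀ x : EuclideanSpace ℝ (Fin d),
      ∫⁻ a in closedBall b r, ENNReal.ofReal (dist x a) ^ (-s) ≤
        C₂ * ENNReal.ofReal r ^ ((d:ℝ) - s) := by
    intro x
    have h2r : (0:ℝ) < 2 * r := by linarith
    have hsplitset : closedBall b r ⊆
        closedBall x (2 * r) ∪ (closedBall b r \ closedBall x (2 * r)) := by
      intro a ha
      by_cases hmem : a ∈ closedBall x (2 * r)
      · exact Or.inl hmem
      · exact Or.inr ⟨ha, hmem⟩
    have hfirst : ∫⁻ a in closedBall x (2 * r), ENNReal.ofReal (dist x a) ^ (-s) ≤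
        C * ENNReal.ofReal ((2:ℝ) ^ ((d:ℝ) - s)) * ENNReal.ofReal r ^ ((d:ℝ) - s) := by
      refine le_trans (hC x (2 * r) h2r) (le_of_eq ?_)
      rw [ENNReal.ofReal_mul (by norm_num), ENNReal.mul_rpow_of_nonneg _ _ (by linarith),
        ENNReal.ofReal_rpow_of_pos two_pos, mul_assoc]
    have hsecond : ∫⁻ a in closedBall b r \ closedBall x (2 * r),
        ENNReal.ofReal (dist x a) ^ (-s) ≤ B * ENNReal.ofReal r ^ ((d:ℝ) - s) := by
      calc ∫⁻ a in closedBall b r \ closedBall x (2 * r), ENNReal.ofReal (dist x a) ^ (-s)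
          ≤ ∫⁻ _a in closedBall b r \ closedBall x (2 * r), ENNReal.ofReal r ^ (-s) := by
            refine setLIntegral_mono'
              (measurableSet_closedBall.diff measurableSet_closedBall) fun a hadiff => ?_
            have h1 : 2 * r < dist a x := by
              by_contra hcon
              exact hadiff.2 (mem_closedBall.2 (not_lt.1 hcon))
            have h2 : r ≤ dist x a := by rw [dist_comm]; linarith
            exact rpow_neg_anti hr h2 hs0.le
        _ = ENNReal.ofReal r ^ (-s) * volume (closedBall b r \ closedBall x (2 * r)) :=
            setLIntegral_const _ _
        _ ≤ ENNReal.ofReal r ^ (-s) * volume (closedBall b r) :=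
            mul_le_mul_right (measure_mono Set.diff_subset) _
        _ = ENNReal.ofReal r ^ (-s) * (ENNReal.ofReal (r ^ d) * B) := by
            rw [Measure.addHaar_closedBall volume b hr.le, finrank_euclideanSpace_fin]
        _ = B * ENNReal.ofReal r ^ ((d:ℝ) - s) := by
            have hro0 : ENNReal.ofReal r ≠ 0 := by
              simpa [ENNReal.ofReal_eq_zero] using hr.not_ge
            rw [ENNReal.ofReal_pow hr.le, ← ENNReal.rpow_natCast (ENNReal.ofReal r) d,
              ← mul_assoc, ← ENNReal.rpow_add _ _ hro0 ENNReal.ofReal_ne_top,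
              neg_add_eq_sub, mul_comm]
    calc ∫⁻ a in closedBall b r, ENNReal.ofReal (dist x a) ^ (-s)
        ≤ ∫⁻ a in closedBall x (2 * r) ∪ (closedBall b r \ closedBall x (2 * r)),
            ENNReal.ofReal (dist x a) ^ (-s) := lintegral_mono_set hsplitset
      _ ≤ (∫⁻ a in closedBall x (2 * r), ENNReal.ofReal (dist x a) ^ (-s)) +
            ∫⁻ a in closedBall b r \ closedBall x (2 * r), ENNReal.ofReal (dist x a) ^ (-s) :=
          lintegral_union_le _ _ _
      _ ≤ C * ENNReal.ofReal ((2:ℝ) ^ ((d:ℝ) - s)) * ENNReal.ofReal r ^ ((d:ℝ) - s) +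
            B * ENNReal.ofReal r ^ ((d:ℝ) - s) := add_le_add hfirst hsecond
      _ = C₂ * ENNReal.ofReal r ^ ((d:ℝ) - s) := by rw [hC2def, add_mul]
  have hT : ∫⁻ a in closedBall b r, g a ≤
      μ (ball b δ) * (C₂ * ENNReal.ofReal r ^ ((d:ℝ) - s)) := by
    have hswap := lintegral_lintegral_swap (μ := volume.restrict (closedBall b r))
      (ν := μ.restrict (ball b δ))
      (f := fun a x => ENNReal.ofReal (dist x a) ^ (-s)) hcont.measurable.aemeasurable
    have hswap' : (∫⁻ a in closedBall b r, g a) =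
        ∫⁻ x in ball b δ, (∫⁻ a in closedBall b r,
          ENNReal.ofReal (dist x a) ^ (-s)) ∂μ := by
      rw [hgdef]
      simpa using hswap
    rw [hswap']
    calc ∫⁻ x in ball b δ, (∫⁻ a in closedBall b r, ENNReal.ofReal (dist x a) ^ (-s)) ∂μ
        ≤ ∫⁻ _x in ball b δ, C₂ * ENNReal.ofReal r ^ ((d:ℝ) - s) ∂μ :=
          setLIntegral_mono' measurableSet_ball fun x _ => hinner x
      _ = C₂ * ENNReal.ofReal r ^ ((d:ℝ) - s) * μ (ball b δ) := setLIntegral_const _ _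
      _ = μ (ball b δ) * (C₂ * ENNReal.ofReal r ^ ((d:ℝ) - s)) := mul_comm _ _
  -- Step 3 : Chebyshev
  have hcheb : volume (E ∩ closedBall b r) ≤
      c⁻¹ * (μ (ball b δ) * (C₂ * ENNReal.ofReal r ^ ((d:ℝ) - s))) := by
    have hcne0 : c ≠ 0 := by
      rw [hcdef]
      exact mul_ne_zero (ENNReal.inv_ne_zero.2 hrsfin) hepos
    have hcnetop : c ≠ ∞ := by
      rw [hcdef]
      exact ENNReal.mul_ne_top (ENNReal.inv_ne_top.2 hrs0) hefin
    have h1 : volume (E ∩ closedBall b r) ≤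
        (volume.restrict (closedBall b r)) {a | c ≤ g a} := by
      rw [Measure.restrict_apply (measurableSet_le measurable_const hgmeas)]
      exact measure_mono fun a ha => ⟨hEsub ha, ha.2⟩
    have h2 := mul_meas_ge_le_lintegral₀ (μ := volume.restrict (closedBall b r))
      hgmeas.aemeasurable c
    have h3 : c * volume (E ∩ closedBall b r) ≤
        μ (ball b δ) * (C₂ * ENNReal.ofReal r ^ ((d:ℝ) - s)) :=
      le_trans (mul_le_mul_right h1 c) (le_trans h2 hT)
    calc volume (E ∩ closedBall b r)
        = c⁻¹ * (c * volume (E ∩ closedBall b r)) := by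
          rw [← mul_assoc, ENNReal.inv_mul_cancel hcne0 hcnetop, one_mul]
      _ ≤ c⁻¹ * (μ (ball b δ) * (C₂ * ENNReal.ofReal r ^ ((d:ℝ) - s))) :=
          mul_le_mul_right h3 _
  -- Step 4 : assemble
  have hXR : ENNReal.ofReal r ^ s * ENNReal.ofReal r ^ ((d:ℝ) - s) = ENNReal.ofReal (r ^ d) := by
    rw [← ENNReal.rpow_add s ((d:ℝ) - s) (by simpa [ENNReal.ofReal_eq_zero] using hr.not_ge)
      ENNReal.ofReal_ne_top, add_sub_cancel, ENNReal.rpow_natCast,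
      ENNReal.ofReal_pow hr.le]
  have hcinv : c⁻¹ = ENNReal.ofReal r ^ s * e⁻¹ := by
    rw [hcdef, ENNReal.mul_inv (Or.inl (ENNReal.inv_ne_zero.2 hrsfin))
      (Or.inl (ENNReal.inv_ne_top.2 hrs0)), inv_inv]
  have hfinal : volume (E ∩ closedBall b r) ≤ η * ENNReal.ofReal (r ^ d) := by
    calc volume (E ∩ closedBall b r)
        ≤ c⁻¹ * (μ (ball b δ) * (C₂ * ENNReal.ofReal r ^ ((d:ℝ) - s))) := hcheb
      _ = e⁻¹ * (C₂ * μ (ball b δ)) *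
            (ENNReal.ofReal r ^ s * ENNReal.ofReal r ^ ((d:ℝ) - s)) := by
          rw [hcinv]; ring
      _ ≤ e⁻¹ * (η * e) * (ENNReal.ofReal r ^ s * ENNReal.ofReal r ^ ((d:ℝ) - s)) :=
          mul_le_mul_left (mul_le_mul_right hδμ _) _
      _ = η * ENNReal.ofReal (r ^ d) := by
          rw [hXR, show e⁻¹ * (η * e) = η * (e⁻¹ * e) by ring,
            ENNReal.inv_mul_cancel hepos hefin, mul_one]
  exact ENNReal.div_le_of_le_mul hfinal
end

section
/- Let b ∈ ℝ^d and let μ be a finite positive Borel measure on ℝ^d × ℝ^d with compact support, assigning no mass to {b} × ℝ^d or to ℝ^d × {b}. Let s, t > 0 with s + t < d, and ε > 0. Then the set E = {a ∈ ℝ^d : |a-b|^{s+t} · ∫∫ dμ(x,y)/(|x-a|^s |y-a|^t) ≥ ε} satisfies ∑_{n=1}^∞ 2^{(s+t)n} C_{s+t}(A_n(b) ∩ E) < ∞; in particular E has Lebesgue density zero at b. -/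
open MeasureTheory Metric Filter ENNReal

/-- The order-`s` Riesz capacity. -/
noncomputable def rieszCap (d : ℕ) (s : ℝ) (E : Set (EuclideanSpace ℝ (Fin d))) : ℝ≥0∞ :=
  ⨆ (μ : Measure (EuclideanSpace ℝ (Fin d)))
    (_ : ∃ K, IsCompact K ∧ K ⊆ E ∧ μ Kᶜ = 0)
    (_ : ∀ a, ∫⁻ x, (ENNReal.ofReal (dist x a)) ^ (-s) ∂μ ≤ 1),
    μ Set.univ

/-- The dyadic annulus `A_n(b)`. -/
def annulus (d : ℕ) (b : EuclideanSpace ℝ (Fin d)) (n : ℕ) :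
    Set (EuclideanSpace ℝ (Fin d)) :=
  {x | ((1 : ℝ) / 2) ^ (n + 1) ≤ dist x b ∧ dist x b ≤ ((1 : ℝ) / 2) ^ n}

namespace DLW

/-! ### ENNReal helpers -/

lemma rpow_ne_zero' {a : ℝ≥0∞} (h0 : a ≠ 0) (ht : a ≠ ⊤) (e : ℝ) : a ^ e ≠ 0 :=
  (ENNReal.rpow_pos (pos_iff_ne_zero.mpr h0) ht).ne'

lemma rpow_ne_top' {a : ℝ≥0∞} (h0 : a ≠ 0) (ht : a ≠ ⊤) (e : ℝ) : a ^ e ≠ ⊤ := by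
  rcases le_or_gt 0 e with h | h
  · exact ENNReal.rpow_ne_top_of_nonneg h ht
  · rw [show e = -(-e) by ring, ENNReal.rpow_neg]
    exact ENNReal.inv_ne_top.mpr (rpow_ne_zero' h0 ht _)

lemma two_ne_top' : (2 : ℝ≥0∞) ≠ ⊤ := ENNReal.ofNat_ne_top

lemma tp_ne_top (x : ℝ) : (2 : ℝ≥0∞) ^ x ≠ ⊤ := rpow_ne_top' two_ne_zero two_ne_top' x

lemma tp_ne_zero (x : ℝ) : (2 : ℝ≥0∞) ^ x ≠ 0 := rpow_ne_zero' two_ne_zero two_ne_top' x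

lemma ofReal_half_pow (j : ℕ) :
    ENNReal.ofReal ((1/2 : ℝ) ^ j) = (2 : ℝ≥0∞) ^ (-(j : ℝ)) := by
  rw [show ((1/2 : ℝ) ^ j) = (2 : ℝ) ^ (-(j : ℝ)) by
      rw [Real.rpow_neg (by norm_num), Real.rpow_natCast]; simp [one_div, inv_pow],
    ← ENNReal.ofReal_rpow_of_pos (by norm_num), ENNReal.ofReal_ofNat]

lemma rpow_neg_anti {w1 w2 : ℝ≥0∞} (h : w1 ≤ w2) {e : ℝ} (he : 0 ≤ e) :
    w2 ^ (-e) ≤ w1 ^ (-e) := by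
  rw [ENNReal.rpow_neg, ENNReal.rpow_neg]
  exact ENNReal.inv_le_inv.mpr (ENNReal.rpow_le_rpow h he)

lemma rpow_neg_add {w : ℝ≥0∞} {s t : ℝ} (hs : 0 < s) (ht : 0 < t) :
    w ^ (-s) * w ^ (-t) = w ^ (-(s+t)) := by
  rcases eq_or_ne w 0 with rfl | h0
  · rw [ENNReal.zero_rpow_of_neg (by linarith), ENNReal.zero_rpow_of_neg (by linarith),
      ENNReal.zero_rpow_of_neg (by linarith), ENNReal.top_mul_top]
  · rcases eq_or_ne w ⊤ with rfl | ht'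
    · rw [ENNReal.top_rpow_of_neg (by linarith), ENNReal.top_rpow_of_neg (by linarith),
        ENNReal.top_rpow_of_neg (by linarith), mul_zero]
    · rw [← ENNReal.rpow_add _ _ h0 ht']; ring_nf

lemma K1 {s t : ℝ} (hs : 0 < s) (ht : 0 < t) (w1 w2 : ℝ≥0∞) :
    w1 ^ (-s) * w2 ^ (-t) ≤ w1 ^ (-(s+t)) + w2 ^ (-(s+t)) := by
  rcases le_total w1 w2 with h | h
  · calc w1 ^ (-s) * w2 ^ (-t) ≤ w1 ^ (-s) * w1 ^ (-t) :=
          mul_le_mul_right (rpow_neg_anti h ht.le) _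
      _ = w1 ^ (-(s+t)) := rpow_neg_add hs ht
      _ ≤ _ := le_self_add
  · calc w1 ^ (-s) * w2 ^ (-t) ≤ w2 ^ (-s) * w2 ^ (-t) :=
          mul_le_mul_left (rpow_neg_anti h hs.le) _
      _ = w2 ^ (-(s+t)) := rpow_neg_add hs ht
      _ ≤ _ := le_add_self

variable {d : ℕ}

local notation "Pt" => EuclideanSpace ℝ (Fin d)

/-- the double-layer potential -/
noncomputable def pot (μ : Measure (Pt × Pt)) (s t : ℝ) (a : Pt) : ℝ≥0∞ :=
  ∫⁻ p, (ENNReal.ofReal (dist p.1 a)) ^ (-s) * (ENNReal.ofReal (dist p.2 a)) ^ (-t) ∂μ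

/-- the exceptional set -/
def Eset (b : Pt) (μ : Measure (Pt × Pt)) (s t ε : ℝ) : Set Pt :=
  {a | ENNReal.ofReal ε ≤ (ENNReal.ofReal (dist a b)) ^ (s + t) * pot μ s t a}

lemma meas_kernel (s t : ℝ) :
    Measurable (Function.uncurry fun (a : Pt) (p : Pt × Pt) =>
      (ENNReal.ofReal (dist p.1 a)) ^ (-s) * (ENNReal.ofReal (dist p.2 a)) ^ (-t)) := by
  apply Measurable.mul
  · apply Continuous.measurable
    apply ENNReal.continuous_rpow_const.comp
    apply ENNReal.continuous_ofReal.comp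
    exact (continuous_fst.comp continuous_snd).dist continuous_fst
  · apply Continuous.measurable
    apply ENNReal.continuous_rpow_const.comp
    apply ENNReal.continuous_ofReal.comp
    exact (continuous_snd.comp continuous_snd).dist continuous_fst

lemma meas_k1 (y : Pt) (e : ℝ) :
    Measurable fun x : Pt => (ENNReal.ofReal (dist y x)) ^ (-e) :=
  (ENNReal.continuous_rpow_const.comp (ENNReal.continuous_ofReal.comp
    (continuous_const.dist continuous_id))).measurable

lemma meas_k1' (y : Pt) (e : ℝ) :
    Measurable fun x : Pt => (ENNReal.ofReal (dist x y)) ^ (-e) :=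
  (ENNReal.continuous_rpow_const.comp (ENNReal.continuous_ofReal.comp
    (continuous_id.dist continuous_const))).measurable

lemma meas_pot (μ : Measure (Pt × Pt)) [SFinite μ] (s t : ℝ) :
    Measurable (pot μ s t) :=
  Measurable.lintegral_prod_right (meas_kernel s t)

lemma meas_Eset (b : Pt) (μ : Measure (Pt × Pt)) [SFinite μ] (s t ε : ℝ) :
    MeasurableSet (Eset b μ s t ε) :=
  measurableSet_le measurable_const
    (((ENNReal.continuous_rpow_const.comp (ENNReal.continuous_ofReal.comp
      (continuous_id.dist continuous_const))).measurable).mul (meas_pot μ s t))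

/-! ### the mass bound and the lower-order integral bound -/

lemma mass_le (b : Pt) {s t : ℝ} (hs : 0 < s) (ht : 0 < t) {ν : Measure Pt} {S : Set Pt}
    (hc : ν Sᶜ = 0) {ρ : ℝ} (hρ : 0 < ρ) (hdist : ∀ a ∈ S, dist a b ≤ ρ)
    (hpot : ∫⁻ x, (ENNReal.ofReal (dist x b)) ^ (-(s+t)) ∂ν ≤ 1) :
    ν Set.univ ≤ (ENNReal.ofReal ρ) ^ (s+t) := by
  have hst : (0:ℝ) ≤ s + t := by linarith
  have key : (ENNReal.ofReal ρ) ^ (-(s+t)) * ν Set.univ ≤ 1 := by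
    calc (ENNReal.ofReal ρ) ^ (-(s+t)) * ν Set.univ
        = ∫⁻ _, (ENNReal.ofReal ρ) ^ (-(s+t)) ∂ν := (lintegral_const _).symm
      _ ≤ ∫⁻ x, (ENNReal.ofReal (dist x b)) ^ (-(s+t)) ∂ν := by
          refine lintegral_mono_ae (ae_iff.mpr (measure_mono_null ?_ hc))
          intro x hx hxS
          exact hx (rpow_neg_anti (ENNReal.ofReal_le_ofReal (hdist x hxS)) hst)
      _ ≤ 1 := hpot
  calc ν Set.univ ≤ ((ENNReal.ofReal ρ) ^ (-(s+t)))⁻¹ :=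
        ENNReal.le_inv_iff_mul_le.mpr (by rwa [mul_comm])
    _ = (ENNReal.ofReal ρ) ^ (s+t) := by rw [ENNReal.rpow_neg, inv_inv]

lemma int_low {s t : ℝ} (hs : 0 < s) (ht : 0 < t) {ν : Measure Pt} {ρ : ℝ} (hρ : 0 < ρ)
    (hmass : ν Set.univ ≤ (ENNReal.ofReal ρ) ^ (s+t)) (y : Pt)
    (hpot : ∫⁻ x, (ENNReal.ofReal (dist x y)) ^ (-(s+t)) ∂ν ≤ 1) :
    ∫⁻ x, (ENNReal.ofReal (dist y x)) ^ (-t) ∂ν ≤ 2 * (ENNReal.ofReal ρ) ^ s := by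
  have hpot' : ∫⁻ x, (ENNReal.ofReal (dist y x)) ^ (-(s+t)) ∂ν ≤ 1 := by
    simpa [dist_comm] using hpot
  set R := ENNReal.ofReal ρ with hRdef
  have hR0 : R ≠ 0 := (ENNReal.ofReal_pos.mpr hρ).ne'
  have hRt : R ≠ ⊤ := ENNReal.ofReal_ne_top
  have ptw : ∀ w : ℝ≥0∞, w ^ (-t) ≤ R ^ (-t) + R ^ s * w ^ (-(s+t)) := by
    intro w
    rcases le_total R w with h | h
    · exact (rpow_neg_anti h ht.le).trans le_self_add
    · rcases eq_or_ne w 0 with rfl | hw0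
      · have h1 : ((0:ℝ≥0∞)) ^ (-(s+t)) = ⊤ := ENNReal.zero_rpow_of_neg (by linarith)
        rw [h1, ENNReal.mul_top (rpow_ne_zero' hR0 hRt s), add_top]
        exact le_top
      · have hwt : w ≠ ⊤ := (h.trans_lt (lt_top_iff_ne_top.mpr hRt)).ne
        calc w ^ (-t) = w ^ s * w ^ (-(s+t)) := by
              rw [← ENNReal.rpow_add _ _ hw0 hwt, show s + -(s+t) = -t by ring]
          _ ≤ R ^ s * w ^ (-(s+t)) := mul_le_mul_left (ENNReal.rpow_le_rpow h hs.le) _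
          _ ≤ _ := le_add_self
  calc ∫⁻ x, (ENNReal.ofReal (dist y x)) ^ (-t) ∂ν
      ≤ ∫⁻ x, (R ^ (-t) + R ^ s * (ENNReal.ofReal (dist y x)) ^ (-(s+t))) ∂ν :=
        lintegral_mono fun x => ptw _
    _ = R ^ (-t) * ν Set.univ + R ^ s * ∫⁻ x, (ENNReal.ofReal (dist y x)) ^ (-(s+t)) ∂ν := by
        rw [lintegral_add_left measurable_const, lintegral_const,
          lintegral_const_mul _ (meas_k1 y (s+t))]
    _ ≤ R ^ (-t) * R ^ (s+t) + R ^ s * 1 :=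
        add_le_add (mul_le_mul_right hmass _) (mul_le_mul_right hpot' _)
    _ = 2 * R ^ s := by
        rw [← ENNReal.rpow_add _ _ hR0 hRt, show -t + (s+t) = s by ring, mul_one, two_mul]

/-! ### the majorant -/

/-- dyadic radii -/
noncomputable def rn (n : ℕ) : ℝ := (1/2 : ℝ) ^ (n+1)

lemma rn_pos (n : ℕ) : 0 < rn n := pow_pos (by norm_num) _

lemma rn_lower (n : ℕ) : ((1:ℝ)/2) ^ (n+2) = rn n / 2 := by
  rw [rn, pow_succ]; ring

/-- the summable majorant -/
noncomputable def Maj (b : Pt) (s t : ℝ) (n : ℕ) (p : Pt × Pt) : ℝ≥0∞ :=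
  (if 2 * rn n ≤ dist p.1 b then
    (ENNReal.ofReal (dist p.1 b / 2)) ^ (-s) * (2 * (ENNReal.ofReal (rn n)) ^ s) else 0)
  + (if 2 * rn n ≤ dist p.2 b then
    (ENNReal.ofReal (dist p.2 b / 2)) ^ (-t) * (2 * (ENNReal.ofReal (rn n)) ^ t) else 0)
  + (if rn n / 4 < dist p.1 b ∧ dist p.1 b < 2 * rn n then 2 else 0)
  + (if rn n / 4 < dist p.2 b ∧ dist p.2 b < 2 * rn n then 2 else 0)

/-- the deep region -/
def Deep (b : Pt) (n : ℕ) : Set (Pt × Pt) :=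
  {p | dist p.1 b ≤ rn n / 4 ∧ dist p.2 b ≤ rn n / 4}

lemma meas_Maj (b : Pt) (s t : ℝ) (n : ℕ) : Measurable (Maj b s t n) := by
  have m1 : Measurable fun p : Pt × Pt => dist p.1 b :=
    (continuous_fst.dist continuous_const).measurable
  have m2 : Measurable fun p : Pt × Pt => dist p.2 b :=
    (continuous_snd.dist continuous_const).measurable
  have v1 : Measurable fun p : Pt × Pt =>
      (ENNReal.ofReal (dist p.1 b / 2)) ^ (-s) * (2 * (ENNReal.ofReal (rn n)) ^ s) :=
    ((ENNReal.continuous_rpow_const.comp (ENNReal.continuous_ofReal.comp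
      (((continuous_fst.dist continuous_const).div_const 2)))).measurable).mul measurable_const
  have v2 : Measurable fun p : Pt × Pt =>
      (ENNReal.ofReal (dist p.2 b / 2)) ^ (-t) * (2 * (ENNReal.ofReal (rn n)) ^ t) :=
    ((ENNReal.continuous_rpow_const.comp (ENNReal.continuous_ofReal.comp
      (((continuous_snd.dist continuous_const).div_const 2)))).measurable).mul measurable_const
  refine Measurable.add (Measurable.add (Measurable.add ?_ ?_) ?_) ?_
  · exact Measurable.ite (measurableSet_le measurable_const m1) v1 measurable_const
  · exact Measurable.ite (measurableSet_le measurable_const m2) v2 measurable_const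
  · exact Measurable.ite ((measurableSet_lt measurable_const m1).inter
      (measurableSet_lt m1 measurable_const)) measurable_const measurable_const
  · exact Measurable.ite ((measurableSet_lt measurable_const m2).inter
      (measurableSet_lt m2 measurable_const)) measurable_const measurable_const

lemma meas_Deep (b : Pt) (n : ℕ) : MeasurableSet (Deep b n) := by
  have m1 : Measurable fun p : Pt × Pt => dist p.1 b :=
    (continuous_fst.dist continuous_const).measurable
  have m2 : Measurable fun p : Pt × Pt => dist p.2 b :=
    (continuous_snd.dist continuous_const).measurable
  exact (measurableSet_le m1 measurable_const).inter (measurableSet_le m2 measurable_const)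

/-! ### the core estimate -/

lemma core (b : Pt) (μ : Measure (Pt × Pt)) [IsFiniteMeasure μ] {s t ε : ℝ}
    (hs : 0 < s) (ht : 0 < t) (n : ℕ) (ν : Measure Pt)
    (hνc : ν ((annulus d b (n+1)) ∩ Eset b μ s t ε)ᶜ = 0)
    (hpot : ∀ a, ∫⁻ x, (ENNReal.ofReal (dist x a)) ^ (-(s+t)) ∂ν ≤ 1) :
    ENNReal.ofReal ε * ν Set.univ ≤
      (ENNReal.ofReal (rn n)) ^ (s+t) * ∫⁻ p, Maj b s t n p ∂μ
      + (ENNReal.ofReal (rn n)) ^ (s+t) *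
          ((ENNReal.ofReal (rn n / 4)) ^ (-(s+t)) * ν Set.univ * μ (Deep b n)) := by
  have hst : (0:ℝ) ≤ s + t := by positivity
  set S := (annulus d b (n+1)) ∩ Eset b μ s t ε with hSdef
  have hρ := rn_pos n
  set R := ENNReal.ofReal (rn n) with hRdef
  have hR0 : R ≠ 0 := (ENNReal.ofReal_pos.mpr hρ).ne'
  have hRt : R ≠ ⊤ := ENNReal.ofReal_ne_top
  have hSd : ∀ a ∈ S, dist a b ≤ rn n := fun a ha => ha.1.2
  have hSd' : ∀ a ∈ S, rn n / 2 ≤ dist a b := fun a ha => (rn_lower n) ▸ ha.1.1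
  have hmass : ν Set.univ ≤ R ^ (s+t) := mass_le b hs ht hνc hρ hSd (hpot b)
  haveI : IsFiniteMeasure ν :=
    ⟨lt_of_le_of_lt hmass (ENNReal.rpow_lt_top_of_nonneg hst ENNReal.ofReal_ne_top)⟩
  have hpot' : ∀ y : Pt, ∫⁻ x, (ENNReal.ofReal (dist y x)) ^ (-(s+t)) ∂ν ≤ 1 := fun y => by
    simpa [dist_comm] using hpot y
  set G : Pt × Pt → ℝ≥0∞ := fun p =>
    ∫⁻ a, (ENNReal.ofReal (dist p.1 a)) ^ (-s) * (ENNReal.ofReal (dist p.2 a)) ^ (-t) ∂ν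
    with hGdef
  have step1 : ENNReal.ofReal ε * ν Set.univ ≤ R ^ (s+t) * ∫⁻ a, pot μ s t a ∂ν := by
    calc ENNReal.ofReal ε * ν Set.univ = ∫⁻ _, ENNReal.ofReal ε ∂ν := (lintegral_const _).symm
      _ ≤ ∫⁻ a, R ^ (s+t) * pot μ s t a ∂ν := by
          refine lintegral_mono_ae (ae_iff.mpr (measure_mono_null ?_ hνc))
          intro a ha haS
          refine ha (le_trans haS.2 (mul_le_mul_left
            (ENNReal.rpow_le_rpow (ENNReal.ofReal_le_ofReal (hSd a haS)) hst) _))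
      _ = R ^ (s+t) * ∫⁻ a, pot μ s t a ∂ν := lintegral_const_mul _ (meas_pot μ s t)
  have swap : ∫⁻ a, pot μ s t a ∂ν = ∫⁻ p, G p ∂μ := by
    simp only [pot, hGdef]
    exact lintegral_lintegral_swap (meas_kernel s t).aemeasurable
  have Gbound : ∀ p, G p ≤ Maj b s t n p +
      (Deep b n).indicator (fun _ => (ENNReal.ofReal (rn n / 4)) ^ (-(s+t)) * ν Set.univ) p := by
    intro p
    by_cases h1 : 2 * rn n ≤ dist p.1 b
    · have hb : G p ≤ (ENNReal.ofReal (dist p.1 b / 2)) ^ (-s) * (2 * R ^ s) := by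
        calc G p ≤ ∫⁻ a, (ENNReal.ofReal (dist p.1 b / 2)) ^ (-s) *
              (ENNReal.ofReal (dist p.2 a)) ^ (-t) ∂ν := by
              refine lintegral_mono_ae (ae_iff.mpr (measure_mono_null ?_ hνc))
              intro a ha haS
              refine ha (mul_le_mul_left (rpow_neg_anti (ENNReal.ofReal_le_ofReal ?_) hs.le) _)
              have := hSd a haS
              have h3 := dist_triangle p.1 a b
              linarith [dist_comm a b ▸ this]
          _ = (ENNReal.ofReal (dist p.1 b / 2)) ^ (-s) *
              ∫⁻ a, (ENNReal.ofReal (dist p.2 a)) ^ (-t) ∂ν :=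
              lintegral_const_mul _ (meas_k1 p.2 t)
          _ ≤ _ := mul_le_mul_right (int_low hs ht hρ hmass p.2 (hpot p.2)) _
      refine hb.trans (le_trans ?_ le_self_add)
      simp only [Maj, if_pos h1]
      exact (le_self_add.trans le_self_add).trans le_self_add
    · by_cases h2 : 2 * rn n ≤ dist p.2 b
      · have hmass' : ν Set.univ ≤ R ^ (t+s) := by rwa [add_comm t s]
        have hpot2 : ∫⁻ x, (ENNReal.ofReal (dist x p.1)) ^ (-(t+s)) ∂ν ≤ 1 := by
          have := hpot p.1; rwa [show -(s+t) = -(t+s) by ring] at this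
        have hb : G p ≤ (ENNReal.ofReal (dist p.2 b / 2)) ^ (-t) * (2 * R ^ t) := by
          calc G p ≤ ∫⁻ a, (ENNReal.ofReal (dist p.2 b / 2)) ^ (-t) *
                (ENNReal.ofReal (dist p.1 a)) ^ (-s) ∂ν := by
                refine lintegral_mono_ae (ae_iff.mpr (measure_mono_null ?_ hνc))
                intro a ha haS
                have hdd : dist p.2 b / 2 ≤ dist p.2 a := by
                  have := hSd a haS
                  have h3 := dist_triangle p.2 a b
                  linarith [dist_comm a b ▸ this]
                refine ha ?_
                calc (ENNReal.ofReal (dist p.1 a)) ^ (-s) * (ENNReal.ofReal (dist p.2 a)) ^ (-t)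
                    = (ENNReal.ofReal (dist p.2 a)) ^ (-t) *
                      (ENNReal.ofReal (dist p.1 a)) ^ (-s) := mul_comm _ _
                  _ ≤ _ := mul_le_mul_left
                      (rpow_neg_anti (ENNReal.ofReal_le_ofReal hdd) ht.le) _
            _ = (ENNReal.ofReal (dist p.2 b / 2)) ^ (-t) *
                ∫⁻ a, (ENNReal.ofReal (dist p.1 a)) ^ (-s) ∂ν :=
                lintegral_const_mul _ (meas_k1 p.1 s)
            _ ≤ _ := mul_le_mul_right (int_low ht hs hρ hmass' p.1 hpot2) _
        refine hb.trans (le_trans ?_ le_self_add)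
        simp only [Maj, if_pos h2]
        exact (le_add_self.trans le_self_add).trans le_self_add
      · by_cases h3 : dist p.1 b ≤ rn n / 4 ∧ dist p.2 b ≤ rn n / 4
        · have hb : G p ≤ (ENNReal.ofReal (rn n / 4)) ^ (-(s+t)) * ν Set.univ := by
            calc G p ≤ ∫⁻ _, (ENNReal.ofReal (rn n / 4)) ^ (-s) *
                  (ENNReal.ofReal (rn n / 4)) ^ (-t) ∂ν := by
                  refine lintegral_mono_ae (ae_iff.mpr (measure_mono_null ?_ hνc))
                  intro a ha haS
                  refine ha (mul_le_mul'
                    (rpow_neg_anti (ENNReal.ofReal_le_ofReal ?_) hs.le)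
                    (rpow_neg_anti (ENNReal.ofReal_le_ofReal ?_) ht.le))
                  · have := hSd' a haS
                    have h4 := dist_triangle a p.1 b
                    have h5 := dist_comm a p.1
                    linarith [h3.1]
                  · have := hSd' a haS
                    have h4 := dist_triangle a p.2 b
                    have h5 := dist_comm a p.2
                    linarith [h3.2]
              _ = (ENNReal.ofReal (rn n / 4)) ^ (-(s+t)) * ν Set.univ := by
                  rw [lintegral_const, rpow_neg_add hs ht]
          refine hb.trans (le_trans ?_ le_add_self)
          rw [Set.indicator_of_mem (by exact h3 : p ∈ Deep b n)]
        · have hG2 : G p ≤ 2 := by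
            calc G p ≤ ∫⁻ a, ((ENNReal.ofReal (dist p.1 a)) ^ (-(s+t)) +
                  (ENNReal.ofReal (dist p.2 a)) ^ (-(s+t))) ∂ν :=
                  lintegral_mono fun a => K1 hs ht _ _
              _ = (∫⁻ a, (ENNReal.ofReal (dist p.1 a)) ^ (-(s+t)) ∂ν) +
                  ∫⁻ a, (ENNReal.ofReal (dist p.2 a)) ^ (-(s+t)) ∂ν :=
                  lintegral_add_left (meas_k1 p.1 (s+t)) _
              _ ≤ 1 + 1 := add_le_add (hpot' p.1) (hpot' p.2)
              _ = 2 := one_add_one_eq_two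
          have hcond : (rn n / 4 < dist p.1 b ∧ dist p.1 b < 2 * rn n) ∨
              (rn n / 4 < dist p.2 b ∧ dist p.2 b < 2 * rn n) := by
            push_neg at h1 h2
            rcases not_and_or.mp h3 with h | h
            · exact Or.inl ⟨lt_of_not_ge h, h1⟩
            · exact Or.inr ⟨lt_of_not_ge h, h2⟩
          have h2M : (2:ℝ≥0∞) ≤ Maj b s t n p := by
            simp only [Maj]
            rcases hcond with h | h
            · rw [if_pos h]; exact le_add_self.trans le_self_add
            · rw [if_pos h]; exact le_add_self
          exact hG2.trans (h2M.trans le_self_add)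
  calc ENNReal.ofReal ε * ν Set.univ ≤ R ^ (s+t) * ∫⁻ a, pot μ s t a ∂ν := step1
    _ = R ^ (s+t) * ∫⁻ p, G p ∂μ := by rw [swap]
    _ ≤ R ^ (s+t) * (∫⁻ p, Maj b s t n p ∂μ +
        (ENNReal.ofReal (rn n / 4)) ^ (-(s+t)) * ν Set.univ * μ (Deep b n)) := by
        refine mul_le_mul_right ?_ _
        calc ∫⁻ p, G p ∂μ ≤ ∫⁻ p, (Maj b s t n p + (Deep b n).indicator
              (fun _ => (ENNReal.ofReal (rn n / 4)) ^ (-(s+t)) * ν Set.univ) p) ∂μ :=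
              lintegral_mono Gbound
          _ = ∫⁻ p, Maj b s t n p ∂μ +
              (ENNReal.ofReal (rn n / 4)) ^ (-(s+t)) * ν Set.univ * μ (Deep b n) := by
              rw [lintegral_add_left (meas_Maj b s t n), lintegral_indicator (meas_Deep b n),
                setLIntegral_const]
    _ = _ := mul_add _ _ _

/-! ### geometric series pieces -/

lemma ex_pow_le {δ : ℝ} (hδ : 0 < δ) : ∃ m : ℕ, (1/2 : ℝ) ^ m ≤ δ := by
  obtain ⟨m, hm⟩ := exists_pow_lt_of_lt_one hδ (by norm_num : (1/2 : ℝ) < 1)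
  exact ⟨m, hm.le⟩

lemma geom_piece {e : ℝ} (he : 0 < e) (δ : ℝ) (hδ : 0 < δ) :
    ∑' n : ℕ, (if 2 * rn n ≤ δ then
      (ENNReal.ofReal (δ / 2)) ^ (-e) * (2 * (ENNReal.ofReal (rn n)) ^ e) else 0)
      ≤ 2 * (1 - (2:ℝ≥0∞) ^ (-e))⁻¹ := by
  set q : ℝ≥0∞ := (2:ℝ≥0∞) ^ (-e) with hqdef
  have hex := ex_pow_le hδ
  set m := Nat.find hex with hmdef
  have hmle : (1/2 : ℝ) ^ m ≤ δ := Nat.find_spec hex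
  have key : ∀ n : ℕ, (if 2 * rn n ≤ δ then
      (ENNReal.ofReal (δ / 2)) ^ (-e) * (2 * (ENNReal.ofReal (rn n)) ^ e) else 0)
      ≤ (if m ≤ n then 2 * q ^ (n - m) else 0) := by
    intro n
    by_cases hc : 2 * rn n ≤ δ
    · have h2rn : 2 * rn n = (1/2 : ℝ) ^ n := by rw [rn, pow_succ]; ring
      have hcm : (1/2 : ℝ) ^ n ≤ δ := by rw [← h2rn]; exact hc
      have hmn : m ≤ n := Nat.find_le hcm
      rw [if_pos hc, if_pos hmn]
      have b1 : (ENNReal.ofReal (δ / 2)) ^ (-e) ≤ (2:ℝ≥0∞) ^ (((m:ℝ)+1) * e) := by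
        have h12 : (1/2 : ℝ) ^ (m+1) ≤ δ / 2 := by rw [pow_succ]; linarith
        calc (ENNReal.ofReal (δ / 2)) ^ (-e)
            ≤ (ENNReal.ofReal ((1/2 : ℝ) ^ (m+1))) ^ (-e) :=
              rpow_neg_anti (ENNReal.ofReal_le_ofReal h12) he.le
          _ = (2:ℝ≥0∞) ^ (((m:ℝ)+1) * e) := by
              rw [ofReal_half_pow, ← ENNReal.rpow_mul]
              congr 1; push_cast; ring
      have b2 : (ENNReal.ofReal (rn n)) ^ e = (2:ℝ≥0∞) ^ (-((n:ℝ)+1) * e) := by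
        rw [rn, ofReal_half_pow, ← ENNReal.rpow_mul]
        congr 1; push_cast; ring
      calc (ENNReal.ofReal (δ / 2)) ^ (-e) * (2 * (ENNReal.ofReal (rn n)) ^ e)
          ≤ (2:ℝ≥0∞) ^ (((m:ℝ)+1) * e) * (2 * (2:ℝ≥0∞) ^ (-((n:ℝ)+1) * e)) := by
            rw [← b2]; exact mul_le_mul_left b1 _
        _ = 2 * ((2:ℝ≥0∞) ^ (((m:ℝ)+1) * e) * (2:ℝ≥0∞) ^ (-((n:ℝ)+1) * e)) := by ring
        _ = 2 * q ^ (n - m) := by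
            rw [← ENNReal.rpow_add _ _ two_ne_zero two_ne_top']
            congr 1
            rw [hqdef, ← ENNReal.rpow_natCast ((2:ℝ≥0∞) ^ (-e)) (n - m),
              ← ENNReal.rpow_mul, Nat.cast_sub hmn]
            congr 1; ring
    · rw [if_neg hc]; exact zero_le'
  have hsum : (∑' n : ℕ, (if m ≤ n then 2 * q ^ (n - m) else 0)) = ∑' k : ℕ, 2 * q ^ k := by
    have hqne : q ≠ 0 := tp_ne_zero (-e)
    refine tsum_eq_tsum_of_ne_zero_bij (fun k => (k : ℕ) + m) ?_ ?_ ?_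
    · intro k1 k2 h
      exact Subtype.ext (Nat.add_right_cancel h)
    · intro n hn
      have hmn : m ≤ n := by
        by_contra h
        exact hn (if_neg h)
      exact ⟨⟨n - m, mul_ne_zero two_ne_zero (pow_ne_zero _ hqne)⟩, by
        simp [Nat.sub_add_cancel hmn]⟩
    · intro x
      simp [Nat.add_sub_cancel]
  calc ∑' n : ℕ, (if 2 * rn n ≤ δ then
        (ENNReal.ofReal (δ / 2)) ^ (-e) * (2 * (ENNReal.ofReal (rn n)) ^ e) else 0)
      ≤ ∑' n : ℕ, (if m ≤ n then 2 * q ^ (n - m) else 0) := ENNReal.tsum_le_tsum key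
    _ = ∑' k : ℕ, 2 * q ^ k := hsum
    _ = 2 * (1 - q)⁻¹ := by rw [ENNReal.tsum_mul_left, ENNReal.tsum_geometric]

lemma shell_piece (δ : ℝ) (hδ : 0 < δ) :
    ∑' n : ℕ, (if rn n / 4 < δ ∧ δ < 2 * rn n then (2:ℝ≥0∞) else 0) ≤ 6 := by
  have hex := ex_pow_le hδ
  set m := Nat.find hex with hmdef
  have hmle : (1/2 : ℝ) ^ m ≤ δ := Nat.find_spec hex
  have key : ∀ n : ℕ, (if rn n / 4 < δ ∧ δ < 2 * rn n then (2:ℝ≥0∞) else 0)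
      ≤ (if n ∈ Finset.Ico (m - 3) m then (2:ℝ≥0∞) else 0) := by
    intro n
    by_cases hc : rn n / 4 < δ ∧ δ < 2 * rn n
    · have h2rn : 2 * rn n = (1/2 : ℝ) ^ n := by rw [rn, pow_succ]; ring
      have hnm : n < m := by
        by_contra h
        push_neg at h
        have : (1/2 : ℝ) ^ n ≤ δ :=
          le_trans (pow_le_pow_of_le_one (by norm_num) (by norm_num) h) hmle
        rw [← h2rn] at this
        linarith [hc.2]
      have hm3 : m ≤ n + 3 := by
        have hrr : rn n / 4 = (1/2 : ℝ) ^ (n + 3) := by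
          rw [rn, show ((1:ℝ)/2)^(n+3) = ((1:ℝ)/2)^(n+1) * ((1:ℝ)/2)^2 from by
            rw [← pow_add]]
          ring
        exact Nat.find_le (le_of_lt (hrr ▸ hc.1))
      rw [if_pos hc, if_pos (Finset.mem_Ico.mpr ⟨by omega, hnm⟩)]
    · rw [if_neg hc]; exact zero_le'
  calc ∑' n : ℕ, (if rn n / 4 < δ ∧ δ < 2 * rn n then (2:ℝ≥0∞) else 0)
      ≤ ∑' n : ℕ, (if n ∈ Finset.Ico (m - 3) m then (2:ℝ≥0∞) else 0) :=
        ENNReal.tsum_le_tsum key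
    _ = ∑ n ∈ Finset.Ico (m - 3) m, (if n ∈ Finset.Ico (m - 3) m then (2:ℝ≥0∞) else 0) :=
        tsum_eq_sum (fun b hb => if_neg hb)
    _ = ∑ _n ∈ Finset.Ico (m - 3) m, (2:ℝ≥0∞) :=
        Finset.sum_congr rfl (fun x hx => if_pos hx)
    _ ≤ 6 := by
        rw [Finset.sum_const, Nat.card_Ico, nsmul_eq_mul]
        calc ((m - (m-3) : ℕ) : ℝ≥0∞) * 2 ≤ 3 * 2 := by
              refine mul_le_mul_left ?_ _
              have h3 : m - (m - 3) ≤ 3 := by omega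
              exact_mod_cast h3
          _ = 6 := by norm_num

/-- the total majorant constant -/
noncomputable def Cmaj (s t : ℝ) : ℝ≥0∞ :=
  2 * (1 - (2:ℝ≥0∞) ^ (-s))⁻¹ + 2 * (1 - (2:ℝ≥0∞) ^ (-t))⁻¹ + 6 + 6

lemma Cmaj_ne_top {s t : ℝ} (hs : 0 < s) (ht : 0 < t) : Cmaj s t ≠ ⊤ := by
  have h1 : (1 - (2:ℝ≥0∞) ^ (-s)) ≠ 0 := by
    rw [Ne, tsub_eq_zero_iff_le]
    exact not_le.mpr (ENNReal.rpow_lt_one_of_one_lt_of_neg (by norm_num) (by linarith))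
  have h2 : (1 - (2:ℝ≥0∞) ^ (-t)) ≠ 0 := by
    rw [Ne, tsub_eq_zero_iff_le]
    exact not_le.mpr (ENNReal.rpow_lt_one_of_one_lt_of_neg (by norm_num) (by linarith))
  refine ENNReal.add_ne_top.mpr ⟨ENNReal.add_ne_top.mpr ⟨ENNReal.add_ne_top.mpr ⟨?_, ?_⟩, ?_⟩, ?_⟩
  · exact ENNReal.mul_ne_top two_ne_top' (ENNReal.inv_ne_top.mpr h1)
  · exact ENNReal.mul_ne_top two_ne_top' (ENNReal.inv_ne_top.mpr h2)
  · norm_num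
  · norm_num

lemma summaj (b : Pt) {s t : ℝ} (hs : 0 < s) (ht : 0 < t) (p : Pt × Pt)
    (h1 : 0 < dist p.1 b) (h2 : 0 < dist p.2 b) :
    ∑' n, Maj b s t n p ≤ Cmaj s t := by
  simp only [Maj, Cmaj]
  rw [ENNReal.tsum_add, ENNReal.tsum_add, ENNReal.tsum_add]
  exact add_le_add (add_le_add (add_le_add (geom_piece hs _ h1) (geom_piece ht _ h2))
    (shell_piece _ h1)) (shell_piece _ h2)

lemma tsum_int_Maj (b : Pt) (μ : Measure (Pt × Pt)) [IsFiniteMeasure μ] {s t : ℝ}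
    (hs : 0 < s) (ht : 0 < t)
    (hV : μ {p : Pt × Pt | p.1 = b} = 0) (hH : μ {p : Pt × Pt | p.2 = b} = 0) :
    ∑' n, ∫⁻ p, Maj b s t n p ∂μ ≤ Cmaj s t * μ Set.univ := by
  rw [← lintegral_tsum (fun n => (meas_Maj b s t n).aemeasurable)]
  calc ∫⁻ p, ∑' n, Maj b s t n p ∂μ ≤ ∫⁻ _, Cmaj s t ∂μ := by
        refine lintegral_mono_ae (ae_iff.mpr (measure_mono_null ?_
          (measure_union_null hV hH)))
        intro p hp
        by_contra hmem
        rcases not_or.mp hmem with ⟨hp1, hp2⟩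
        exact hp (summaj b hs ht p (dist_pos.mpr hp1) (dist_pos.mpr hp2))
    _ = Cmaj s t * μ Set.univ := lintegral_const _

/-! ### choice of n₀ -/

lemma exists_n0 (b : Pt) (μ : Measure (Pt × Pt)) [IsFiniteMeasure μ] {s t ε : ℝ}
    (hε : 0 < ε) (hV : μ {p : Pt × Pt | p.1 = b} = 0) :
    ∃ n0 : ℕ, ∀ n ≥ n0, (4:ℝ≥0∞) ^ (s+t) * μ (Deep b n) ≤ ENNReal.ofReal ε / 2 := by
  set Dx : ℕ → Set (Pt × Pt) := fun n => {p | dist p.1 b ≤ rn n / 4} with hDx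
  have hDm : ∀ n, MeasurableSet (Dx n) :=
    fun n => measurableSet_le (continuous_fst.dist continuous_const).measurable measurable_const
  have hanti : Antitone Dx := by
    intro i j hij p hp
    have : rn j ≤ rn i := pow_le_pow_of_le_one (by norm_num) (by norm_num) (by omega)
    simp only [hDx, Set.mem_setOf_eq] at hp ⊢
    linarith
  have hint : ⋂ n, Dx n = {p : Pt × Pt | p.1 = b} := by
    ext p
    simp only [Set.mem_iInter, hDx, Set.mem_setOf_eq]
    constructor
    · intro h
      have hd0 : dist p.1 b ≤ 0 := by
        by_contra hpos
        push_neg at hpos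
        obtain ⟨k, hk⟩ := exists_pow_lt_of_lt_one hpos (by norm_num : (1/2:ℝ) < 1)
        have hlt : rn k / 4 < (1/2 : ℝ) ^ k := by
          rw [rn, pow_succ]
          have := pow_pos (show (0:ℝ) < 1/2 by norm_num) k
          linarith
        linarith [h k]
      exact dist_le_zero.mp hd0
    · intro h n
      rw [show dist p.1 b = 0 from by simp [h]]
      exact div_nonneg (rn_pos n).le (by norm_num)
  have htend : Tendsto (fun n => μ (Dx n)) atTop (nhds 0) := by
    have := MeasureTheory.tendsto_measure_iInter_atTop (μ := μ)
      (fun n => (hDm n).nullMeasurableSet) hanti ⟨0, measure_ne_top μ _⟩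
    rwa [hint, hV] at this
  have htop : (4:ℝ≥0∞)^(s+t) ≠ ⊤ := rpow_ne_top' (by norm_num) (by norm_num) _
  have htend2 : Tendsto (fun n => (4:ℝ≥0∞)^(s+t) * μ (Dx n)) atTop (nhds 0) := by
    have := ENNReal.Tendsto.const_mul htend (Or.inr htop)
    rwa [mul_zero] at this
  have hev := htend2.eventually_lt_const
    (ENNReal.div_pos (ENNReal.ofReal_pos.mpr hε).ne' two_ne_top')
  obtain ⟨n0, hn0⟩ := eventually_atTop.mp hev
  refine ⟨n0, fun n hn => ?_⟩
  refine le_trans (mul_le_mul_right (measure_mono (fun p hp => hp.1)) _) (hn0 n hn).le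

/-! ### algebra for powers of two -/

lemma alg_cancel {x : ℝ≥0∞} (h0 : x ≠ 0) (ht : x ≠ ⊤) (e : ℝ) : x ^ e * x ^ (-e) = 1 := by
  rw [← ENNReal.rpow_add _ _ h0 ht, add_neg_cancel, ENNReal.rpow_zero]

lemma alg4 (n : ℕ) (α : ℝ) :
    (ENNReal.ofReal (rn n)) ^ α * (ENNReal.ofReal (rn n / 4)) ^ (-α) = (4:ℝ≥0∞) ^ α := by
  have h0 : ENNReal.ofReal (rn n) ≠ 0 := (ENNReal.ofReal_pos.mpr (rn_pos n)).ne'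
  have h4 : ENNReal.ofReal (rn n / 4) = ENNReal.ofReal (rn n) * 4⁻¹ := by
    rw [div_eq_mul_inv, ENNReal.ofReal_mul (rn_pos n).le,
      ENNReal.ofReal_inv_of_pos (by norm_num), ENNReal.ofReal_ofNat]
  rw [h4, ENNReal.mul_rpow_of_ne_zero h0 (by norm_num), ENNReal.inv_rpow,
    ENNReal.rpow_neg 4 α, inv_inv, ← mul_assoc, alg_cancel h0 ENNReal.ofReal_ne_top, one_mul]

lemma Wlem (n : ℕ) (α : ℝ) :
    (2:ℝ≥0∞) ^ (α * ((n:ℝ)+1)) * (ENNReal.ofReal (rn n)) ^ α = 1 := by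
  rw [rn, ofReal_half_pow, ← ENNReal.rpow_mul,
    ← ENNReal.rpow_add _ _ two_ne_zero two_ne_top',
    show α * ((n:ℝ)+1) + -(((n+1:ℕ):ℝ)) * α = 0 by push_cast; ring, ENNReal.rpow_zero]

/-! ### capacity manipulation -/

lemma rieszCap_le {e : ℝ} {S : Set Pt} {c : ℝ≥0∞}
    (h : ∀ ν : Measure Pt, (∃ K, IsCompact K ∧ K ⊆ S ∧ ν Kᶜ = 0) →
      (∀ a, ∫⁻ x, (ENNReal.ofReal (dist x a)) ^ (-e) ∂ν ≤ 1) → ν Set.univ ≤ c) :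
    rieszCap d e S ≤ c :=
  iSup_le fun ν => iSup_le fun h1 => iSup_le fun h2 => h ν h1 h2

lemma le_rieszCap {e : ℝ} {S : Set Pt} (ν : Measure Pt)
    (h1 : ∃ K, IsCompact K ∧ K ⊆ S ∧ ν Kᶜ = 0)
    (h2 : ∀ a, ∫⁻ x, (ENNReal.ofReal (dist x a)) ^ (-e) ∂ν ≤ 1) :
    ν Set.univ ≤ rieszCap d e S :=
  le_iSup_of_le ν (le_iSup_of_le h1 (le_iSup_of_le h2 le_rfl))

lemma cap_le_triv (b : Pt) (μ : Measure (Pt × Pt)) {s t : ℝ} (ε : ℝ)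
    (hs : 0 < s) (ht : 0 < t) (n : ℕ) :
    rieszCap d (s+t) (annulus d b (n+1) ∩ Eset b μ s t ε)
      ≤ (ENNReal.ofReal (rn n)) ^ (s+t) := by
  refine rieszCap_le fun ν h1 h2 => ?_
  obtain ⟨K, _, hKsub, hKc⟩ := h1
  exact mass_le b hs ht hKc (rn_pos n) (fun a ha => (hKsub ha).1.2) (h2 b)

lemma absorb (b : Pt) (μ : Measure (Pt × Pt)) [IsFiniteMeasure μ] {s t ε : ℝ}
    (hs : 0 < s) (ht : 0 < t) (hε : 0 < ε) {n0 : ℕ}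
    (hn0 : ∀ n ≥ n0, (4:ℝ≥0∞) ^ (s+t) * μ (Deep b n) ≤ ENNReal.ofReal ε / 2)
    {n : ℕ} (hn : n0 ≤ n) (ν : Measure Pt)
    (hνc : ν ((annulus d b (n+1)) ∩ Eset b μ s t ε)ᶜ = 0)
    (h2 : ∀ a, ∫⁻ x, (ENNReal.ofReal (dist x a)) ^ (-(s+t)) ∂ν ≤ 1) :
    ν Set.univ ≤ (ENNReal.ofReal (rn n)) ^ (s+t) *
      ((∫⁻ p, Maj b s t n p ∂μ) * (2 * (ENNReal.ofReal ε)⁻¹)) := by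
  have hEne : ENNReal.ofReal ε ≠ 0 := (ENNReal.ofReal_pos.mpr hε).ne'
  have hR0 : ENNReal.ofReal (rn n) ≠ 0 := (ENNReal.ofReal_pos.mpr (rn_pos n)).ne'
  have hco := core b μ hs ht n ν hνc h2
  have hmass : ν Set.univ ≤ (ENNReal.ofReal (rn n)) ^ (s+t) :=
    mass_le b hs ht hνc (rn_pos n) (fun a ha => ha.1.2) (h2 b)
  have hx : ENNReal.ofReal ε * ν Set.univ ≠ ⊤ :=
    ENNReal.mul_ne_top ENNReal.ofReal_ne_top
      (ne_top_of_le_ne_top (rpow_ne_top' hR0 ENNReal.ofReal_ne_top _) hmass)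
  have h2nd : (ENNReal.ofReal (rn n)) ^ (s+t) *
      ((ENNReal.ofReal (rn n / 4)) ^ (-(s+t)) * ν Set.univ * μ (Deep b n))
      ≤ (ENNReal.ofReal ε / 2) * ν Set.univ := by
    have heq : (ENNReal.ofReal (rn n)) ^ (s+t) *
        ((ENNReal.ofReal (rn n / 4)) ^ (-(s+t)) * ν Set.univ * μ (Deep b n))
        = ((4:ℝ≥0∞) ^ (s+t) * μ (Deep b n)) * ν Set.univ := by
      rw [← alg4 n (s+t)]; ring
    rw [heq]
    exact mul_le_mul_left (hn0 n hn) _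
  have habs : ENNReal.ofReal ε * ν Set.univ ≤
      (ENNReal.ofReal (rn n)) ^ (s+t) * (∫⁻ p, Maj b s t n p ∂μ)
        + (ENNReal.ofReal ε * ν Set.univ) / 2 := by
    refine hco.trans (add_le_add_right (h2nd.trans (le_of_eq ?_)) _)
    rw [div_eq_mul_inv, div_eq_mul_inv]; ring
  have h22 : (ENNReal.ofReal ε * ν Set.univ) / 2 ≠ ⊤ := by
    rw [div_eq_mul_inv]
    exact ENNReal.mul_ne_top hx (ENNReal.inv_ne_top.mpr two_ne_zero)
  have hhalf : (ENNReal.ofReal ε * ν Set.univ) / 2 ≤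
      (ENNReal.ofReal (rn n)) ^ (s+t) * ∫⁻ p, Maj b s t n p ∂μ := by
    have h' := habs
    nth_rewrite 1 [← ENNReal.add_halves (ENNReal.ofReal ε * ν Set.univ)] at h'
    exact (ENNReal.add_le_add_iff_right h22).mp h'
  have hdouble : ENNReal.ofReal ε * ν Set.univ ≤
      2 * ((ENNReal.ofReal (rn n)) ^ (s+t) * ∫⁻ p, Maj b s t n p ∂μ) := by
    calc ENNReal.ofReal ε * ν Set.univ
        = 2 * ((ENNReal.ofReal ε * ν Set.univ) / 2) := by
          rw [mul_comm 2 ((ENNReal.ofReal ε * ν Set.univ)/2),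
            ENNReal.div_mul_cancel two_ne_zero two_ne_top']
      _ ≤ _ := mul_le_mul_right hhalf _
  calc ν Set.univ = (ENNReal.ofReal ε)⁻¹ * (ENNReal.ofReal ε * ν Set.univ) := by
        rw [← mul_assoc, ENNReal.inv_mul_cancel hEne ENNReal.ofReal_ne_top, one_mul]
    _ ≤ (ENNReal.ofReal ε)⁻¹ *
        (2 * ((ENNReal.ofReal (rn n)) ^ (s+t) * ∫⁻ p, Maj b s t n p ∂μ)) :=
        mul_le_mul_right hdouble _
    _ = (ENNReal.ofReal (rn n)) ^ (s+t) *
        ((∫⁻ p, Maj b s t n p ∂μ) * (2 * (ENNReal.ofReal ε)⁻¹)) := by ring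

lemma term_bound (b : Pt) (μ : Measure (Pt × Pt)) [IsFiniteMeasure μ] {s t ε : ℝ}
    (hs : 0 < s) (ht : 0 < t) (hε : 0 < ε) {n0 : ℕ}
    (hn0 : ∀ n ≥ n0, (4:ℝ≥0∞) ^ (s+t) * μ (Deep b n) ≤ ENNReal.ofReal ε / 2)
    (n : ℕ) (hn : n0 ≤ n) :
    (2:ℝ≥0∞) ^ ((s+t) * ((n:ℝ)+1)) *
      rieszCap d (s+t) (annulus d b (n+1) ∩ Eset b μ s t ε)
      ≤ (∫⁻ p, Maj b s t n p ∂μ) * (2 * (ENNReal.ofReal ε)⁻¹) := by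
  have hcap : rieszCap d (s+t) (annulus d b (n+1) ∩ Eset b μ s t ε)
      ≤ (ENNReal.ofReal (rn n)) ^ (s+t) *
        ((∫⁻ p, Maj b s t n p ∂μ) * (2 * (ENNReal.ofReal ε)⁻¹)) := by
    refine rieszCap_le fun ν h1 h2 => ?_
    obtain ⟨K, _, hKsub, hKc⟩ := h1
    exact absorb b μ hs ht hε hn0 hn ν
      (measure_mono_null (Set.compl_subset_compl.mpr hKsub) hKc) h2
  calc (2:ℝ≥0∞) ^ ((s+t) * ((n:ℝ)+1)) *
      rieszCap d (s+t) (annulus d b (n+1) ∩ Eset b μ s t ε)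
      ≤ (2:ℝ≥0∞) ^ ((s+t) * ((n:ℝ)+1)) * ((ENNReal.ofReal (rn n)) ^ (s+t) *
        ((∫⁻ p, Maj b s t n p ∂μ) * (2 * (ENNReal.ofReal ε)⁻¹))) :=
        mul_le_mul_right hcap _
    _ = ((2:ℝ≥0∞) ^ ((s+t) * ((n:ℝ)+1)) * (ENNReal.ofReal (rn n)) ^ (s+t)) *
        ((∫⁻ p, Maj b s t n p ∂μ) * (2 * (ENNReal.ofReal ε)⁻¹)) := by ring
    _ = _ := by rw [Wlem n (s+t), one_mul]

/-! ### Part 1 -/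

lemma part1 (b : Pt) (μ : Measure (Pt × Pt)) [IsFiniteMeasure μ] {s t ε : ℝ}
    (hs : 0 < s) (ht : 0 < t) (hε : 0 < ε)
    (hV : μ {p : Pt × Pt | p.1 = b} = 0) (hH : μ {p : Pt × Pt | p.2 = b} = 0) :
    (∑' n : ℕ, (2:ℝ≥0∞) ^ ((s+t) * ((n:ℝ)+1)) *
      rieszCap d (s+t) (annulus d b (n+1) ∩ Eset b μ s t ε)) ≠ ⊤ := by
  obtain ⟨n0, hn0⟩ := exists_n0 b μ (s := s) (t := t) hε hV
  have hEne : ENNReal.ofReal ε ≠ 0 := (ENNReal.ofReal_pos.mpr hε).ne'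
  have hI : ∑' n, ∫⁻ p, Maj b s t n p ∂μ ≤ Cmaj s t * μ Set.univ :=
    tsum_int_Maj b μ hs ht hV hH
  have hBnd : ∀ n : ℕ, (2:ℝ≥0∞) ^ ((s+t) * ((n:ℝ)+1)) *
      rieszCap d (s+t) (annulus d b (n+1) ∩ Eset b μ s t ε)
      ≤ (if n < n0 then 1 else 0) +
        (∫⁻ p, Maj b s t n p ∂μ) * (2 * (ENNReal.ofReal ε)⁻¹) := by
    intro n
    rcases lt_or_ge n n0 with h | h
    · rw [if_pos h]
      refine le_trans ?_ le_self_add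
      calc _ ≤ (2:ℝ≥0∞) ^ ((s+t) * ((n:ℝ)+1)) * (ENNReal.ofReal (rn n)) ^ (s+t) :=
            mul_le_mul_right (cap_le_triv b μ ε hs ht n) _
        _ = 1 := Wlem n (s+t)
    · rw [if_neg (not_lt.mpr h)]
      exact le_trans (term_bound b μ hs ht hε hn0 n h) le_add_self
  refine ne_top_of_le_ne_top ?_ (ENNReal.tsum_le_tsum hBnd)
  rw [ENNReal.tsum_add, ENNReal.tsum_mul_right]
  refine ENNReal.add_ne_top.mpr ⟨?_, ?_⟩
  · rw [tsum_eq_sum (s := Finset.range n0)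
      (fun b hb => if_neg (by simp only [Finset.mem_range] at hb; omega))]
    rw [Finset.sum_congr rfl (fun x hx => if_pos (Finset.mem_range.mp hx)),
      Finset.sum_const, Finset.card_range, nsmul_eq_mul, mul_one]
    exact ENNReal.natCast_ne_top n0
  · exact ENNReal.mul_ne_top
      (ne_top_of_le_ne_top (ENNReal.mul_ne_top (Cmaj_ne_top hs ht) (measure_ne_top μ _)) hI)
      (ENNReal.mul_ne_top two_ne_top' (ENNReal.inv_ne_top.mpr hEne))

/-! ### the potential of Lebesgue measure on balls -/

lemma lint_ball {α : ℝ} (h0 : 0 < α) (hdlt : α < (d:ℝ)) :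
    ∃ C : ℝ≥0∞, C ≠ ⊤ ∧ ∀ (a : Pt) (R : ℝ), 0 < R →
      ∫⁻ x in closedBall a R, (ENNReal.ofReal (dist x a)) ^ (-α) ∂volume
        ≤ C * (ENNReal.ofReal R) ^ ((d:ℝ) - α) := by
  have hd0 : 0 < d := by exact_mod_cast h0.trans hdlt
  haveI : Nontrivial Pt := Module.nontrivial_of_finrank_pos (R := ℝ)
    (by rw [finrank_euclideanSpace_fin]; exact hd0)
  set q : ℝ≥0∞ := (2:ℝ≥0∞) ^ (α - (d:ℝ)) with hq
  have hq1 : q < 1 := ENNReal.rpow_lt_one_of_one_lt_of_neg (by norm_num) (by linarith)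
  set Vb := volume (ball (0 : Pt) 1) with hVb
  have hVbt : Vb ≠ ⊤ := measure_ball_lt_top.ne
  refine ⟨(2:ℝ≥0∞)^α * (1-q)⁻¹ * Vb, ?_, ?_⟩
  · exact ENNReal.mul_ne_top (ENNReal.mul_ne_top (tp_ne_top α)
      (ENNReal.inv_ne_top.mpr (by rw [Ne, tsub_eq_zero_iff_le]; exact not_le.mpr hq1))) hVbt
  intro a R hR
  have hA0 : ENNReal.ofReal R ≠ 0 := (ENNReal.ofReal_pos.mpr hR).ne'
  have hAt : ENNReal.ofReal R ≠ ⊤ := ENNReal.ofReal_ne_top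
  set Sh : ℕ → Set Pt := fun k => closedBall a (R * (1/2)^k) \ ball a (R * (1/2)^(k+1))
    with hSh
  have hcover : closedBall a R ⊆ {a} ∪ ⋃ k, Sh k := by
    intro x hx
    rcases eq_or_ne x a with rfl | hxa
    · exact Or.inl rfl
    · right
      have hdx : 0 < dist x a := dist_pos.mpr hxa
      have hex : ∃ j : ℕ, R * (1/2:ℝ)^(j+1) < dist x a := by
        obtain ⟨j, hj⟩ := exists_pow_lt_of_lt_one (div_pos hdx hR) (by norm_num : (1/2:ℝ) < 1)
        refine ⟨j, ?_⟩
        have h2 : ((1:ℝ)/2)^j * R < dist x a := (lt_div_iff₀ hR).mp hj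
        have h1 : R * (1/2:ℝ)^(j+1) ≤ R * (1/2)^j := by
          have hp : ((1:ℝ)/2)^(j+1) ≤ (1/2)^j :=
            pow_le_pow_of_le_one (by norm_num) (by norm_num) (by omega)
          nlinarith
        nlinarith
      set k := Nat.find hex with hk
      have hklt : R * (1/2:ℝ)^(k+1) < dist x a := Nat.find_spec hex
      have hkup : dist x a ≤ R * (1/2:ℝ)^k := by
        rcases Nat.eq_zero_or_pos k with hk0 | hkpos
        · rw [hk0, pow_zero, mul_one]
          exact mem_closedBall.mp hx
        · have hmin := Nat.find_min hex (m := k - 1) (by omega)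
          push_neg at hmin
          have hksucc : k - 1 + 1 = k := by omega
          rwa [hksucc] at hmin
      exact Set.mem_iUnion.mpr ⟨k, ⟨mem_closedBall.mpr hkup,
        fun hball => absurd (mem_ball.mp hball) (not_lt.mpr hklt.le)⟩⟩
  have hmeasSh : ∀ k, MeasurableSet (Sh k) := fun k =>
    measurableSet_closedBall.diff measurableSet_ball
  have hbound : ∀ k : ℕ, ∫⁻ x in Sh k, (ENNReal.ofReal (dist x a)) ^ (-α) ∂volume
      ≤ ((2:ℝ≥0∞)^α * Vb * (ENNReal.ofReal R)^((d:ℝ)-α)) * q ^ k := by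
    intro k
    have hrk : (0:ℝ) < R * (1/2)^k := by positivity
    have e1 : ENNReal.ofReal (R * (1/2:ℝ)^(k+1))
        = ENNReal.ofReal R * (2:ℝ≥0∞)^(-((k:ℝ)+1)) := by
      rw [ENNReal.ofReal_mul hR.le, ofReal_half_pow]
      congr 2
      push_cast; ring
    have e2 : ENNReal.ofReal ((R * (1/2:ℝ)^k) ^ d)
        = (ENNReal.ofReal R)^((d:ℝ)) * (2:ℝ≥0∞)^(-((k:ℝ)*(d:ℝ))) := by
      rw [ENNReal.ofReal_pow hrk.le, ENNReal.ofReal_mul hR.le, ofReal_half_pow, mul_pow,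
        ← ENNReal.rpow_natCast (ENNReal.ofReal R) d,
        ← ENNReal.rpow_natCast ((2:ℝ≥0∞)^(-(k:ℝ))) d, ← ENNReal.rpow_mul]
      congr 2
      push_cast; ring
    have hvol : volume (Sh k) ≤ ENNReal.ofReal ((R * (1/2:ℝ)^k) ^ d) * Vb := by
      refine le_trans (measure_mono Set.diff_subset) (le_of_eq ?_)
      rw [Measure.addHaar_closedBall volume a hrk.le, finrank_euclideanSpace_fin]
    have hstep1 : ∫⁻ x in Sh k, (ENNReal.ofReal (dist x a)) ^ (-α) ∂volume
        ≤ (ENNReal.ofReal (R * (1/2:ℝ)^(k+1))) ^ (-α) * volume (Sh k) := by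
      rw [← setLIntegral_const (Sh k) _]
      refine lintegral_mono_ae ((ae_restrict_iff' (hmeasSh k)).mpr (ae_of_all _ ?_))
      intro x hxSh
      have hge : R * (1/2:ℝ)^(k+1) ≤ dist x a :=
        not_lt.mp (fun hlt => hxSh.2 (mem_ball.mpr hlt))
      exact rpow_neg_anti (ENNReal.ofReal_le_ofReal hge) h0.le
    have halg : (ENNReal.ofReal (R * (1/2:ℝ)^(k+1))) ^ (-α) *
        (ENNReal.ofReal ((R * (1/2:ℝ)^k) ^ d) * Vb)
        = ((2:ℝ≥0∞)^α * Vb * (ENNReal.ofReal R)^((d:ℝ)-α)) * q ^ k := by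
      rw [e1, e2, ENNReal.mul_rpow_of_ne_zero hA0 (tp_ne_zero _),
        ← ENNReal.rpow_mul (2:ℝ≥0∞) (-((k:ℝ)+1)) (-α),
        show (-((k:ℝ)+1)) * (-α) = (k:ℝ)*α + α from by ring,
        ENNReal.rpow_add _ _ two_ne_zero two_ne_top',
        show (d:ℝ) - α = (d:ℝ) + (-α) from by ring,
        ENNReal.rpow_add _ _ hA0 hAt, hq,
        ← ENNReal.rpow_natCast ((2:ℝ≥0∞)^(α-(d:ℝ))) k, ← ENNReal.rpow_mul,
        show (α - (d:ℝ)) * (k:ℝ) = (k:ℝ)*α + -((k:ℝ)*(d:ℝ)) from by ring,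
        ENNReal.rpow_add _ _ two_ne_zero two_ne_top']
      ring
    calc ∫⁻ x in Sh k, (ENNReal.ofReal (dist x a)) ^ (-α) ∂volume
        ≤ (ENNReal.ofReal (R * (1/2:ℝ)^(k+1))) ^ (-α) * volume (Sh k) := hstep1
      _ ≤ (ENNReal.ofReal (R * (1/2:ℝ)^(k+1))) ^ (-α) *
          (ENNReal.ofReal ((R * (1/2:ℝ)^k) ^ d) * Vb) := mul_le_mul_right hvol _
      _ = _ := halg
  calc ∫⁻ x in closedBall a R, (ENNReal.ofReal (dist x a)) ^ (-α) ∂volume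
      ≤ ∫⁻ x in {a} ∪ ⋃ k, Sh k, (ENNReal.ofReal (dist x a)) ^ (-α) ∂volume :=
        lintegral_mono_set hcover
    _ ≤ (∫⁻ x in {a}, (ENNReal.ofReal (dist x a)) ^ (-α) ∂volume)
        + ∫⁻ x in ⋃ k, Sh k, (ENNReal.ofReal (dist x a)) ^ (-α) ∂volume :=
        lintegral_union_le _ _ _
    _ ≤ 0 + ∑' k, ∫⁻ x in Sh k, (ENNReal.ofReal (dist x a)) ^ (-α) ∂volume :=
        add_le_add (le_of_eq (setLIntegral_measure_zero _ _ (measure_singleton a)))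
          (lintegral_iUnion_le _ _)
    _ ≤ 0 + ∑' k : ℕ, (((2:ℝ≥0∞)^α * Vb * (ENNReal.ofReal R)^((d:ℝ)-α)) * q ^ k) :=
        add_le_add le_rfl (ENNReal.tsum_le_tsum hbound)
    _ = ((2:ℝ≥0∞)^α * Vb * (ENNReal.ofReal R)^((d:ℝ)-α)) * (1-q)⁻¹ := by
        rw [zero_add, ENNReal.tsum_mul_left, ENNReal.tsum_geometric]
    _ = ((2:ℝ≥0∞)^α * (1-q)⁻¹ * Vb) * (ENNReal.ofReal R)^((d:ℝ)-α) := by ring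

lemma pot_ball {α : ℝ} (h0 : 0 < α) (hdlt : α < (d:ℝ)) (b : Pt) :
    ∃ C : ℝ≥0∞, C ≠ ⊤ ∧ ∀ (ρ : ℝ), 0 < ρ → ∀ a : Pt,
      ∫⁻ x in closedBall b ρ, (ENNReal.ofReal (dist x a)) ^ (-α) ∂volume
        ≤ C * (ENNReal.ofReal ρ) ^ ((d:ℝ) - α) := by
  obtain ⟨C1, hC1t, hC1⟩ := lint_ball h0 hdlt
  set Vb := volume (ball (0:Pt) 1) with hVb
  refine ⟨C1 + Vb, ENNReal.add_ne_top.mpr ⟨hC1t, measure_ball_lt_top.ne⟩, ?_⟩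
  intro ρ hρ a
  have hA0 : ENNReal.ofReal ρ ≠ 0 := (ENNReal.ofReal_pos.mpr hρ).ne'
  have hAt : ENNReal.ofReal ρ ≠ ⊤ := ENNReal.ofReal_ne_top
  have hsplit : closedBall b ρ ⊆ closedBall a ρ ∪ (closedBall b ρ \ closedBall a ρ) := by
    intro x hx
    by_cases hxa : x ∈ closedBall a ρ
    · exact Or.inl hxa
    · exact Or.inr ⟨hx, hxa⟩
  calc ∫⁻ x in closedBall b ρ, (ENNReal.ofReal (dist x a)) ^ (-α) ∂volume
      ≤ ∫⁻ x in closedBall a ρ ∪ (closedBall b ρ \ closedBall a ρ),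
          (ENNReal.ofReal (dist x a)) ^ (-α) ∂volume := lintegral_mono_set hsplit
    _ ≤ (∫⁻ x in closedBall a ρ, (ENNReal.ofReal (dist x a)) ^ (-α) ∂volume)
        + ∫⁻ x in closedBall b ρ \ closedBall a ρ,
            (ENNReal.ofReal (dist x a)) ^ (-α) ∂volume := lintegral_union_le _ _ _
    _ ≤ C1 * (ENNReal.ofReal ρ) ^ ((d:ℝ) - α)
        + (ENNReal.ofReal ρ) ^ (-α) * volume (closedBall b ρ) := by
        refine add_le_add (hC1 a ρ hρ) ?_
        calc ∫⁻ x in closedBall b ρ \ closedBall a ρ,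
              (ENNReal.ofReal (dist x a)) ^ (-α) ∂volume
            ≤ ∫⁻ _x in closedBall b ρ \ closedBall a ρ, (ENNReal.ofReal ρ) ^ (-α) ∂volume := by
              refine lintegral_mono_ae ((ae_restrict_iff'
                (measurableSet_closedBall.diff measurableSet_closedBall)).mpr
                (ae_of_all _ ?_))
              intro x hx
              have hgt : ρ < dist x a := not_le.mp (fun h => hx.2 (mem_closedBall.mpr h))
              exact rpow_neg_anti (ENNReal.ofReal_le_ofReal hgt.le) h0.le
          _ = (ENNReal.ofReal ρ) ^ (-α) * volume (closedBall b ρ \ closedBall a ρ) :=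
              setLIntegral_const _ _
          _ ≤ _ := mul_le_mul_right (measure_mono Set.diff_subset) _
    _ ≤ (C1 + Vb) * (ENNReal.ofReal ρ) ^ ((d:ℝ) - α) := by
        rw [add_mul]
        refine add_le_add le_rfl (le_of_eq ?_)
        rw [Measure.addHaar_closedBall volume b hρ.le, finrank_euclideanSpace_fin,
          ENNReal.ofReal_pow hρ.le, ← ENNReal.rpow_natCast (ENNReal.ofReal ρ) d,
          ← mul_assoc, ← ENNReal.rpow_add _ _ hA0 hAt,
          show -α + (d:ℝ) = (d:ℝ) - α from by ring, ← hVb]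
        exact mul_comm _ _

/-! ### Part 2: density zero -/

lemma part2 (b : Pt) (μ : Measure (Pt × Pt)) [IsFiniteMeasure μ] {s t ε : ℝ}
    (hs : 0 < s) (ht : 0 < t) (hε : 0 < ε) (hstd : s + t < (d:ℝ))
    (hV : μ {p : Pt × Pt | p.1 = b} = 0) (hH : μ {p : Pt × Pt | p.2 = b} = 0) :
    DensityZeroAt d (Eset b μ s t ε) b := by
  have hst : (0:ℝ) < s + t := by positivity
  have hd0 : 0 < d := by exact_mod_cast hst.trans hstd
  haveI : Nontrivial Pt := Module.nontrivial_of_finrank_pos (R := ℝ)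
    (by rw [finrank_euclideanSpace_fin]; exact hd0)
  have hEne : ENNReal.ofReal ε ≠ 0 := (ENNReal.ofReal_pos.mpr hε).ne'
  obtain ⟨C2, hC2t, hC2⟩ := pot_ball hst hstd b
  set C3 := max C2 1 with hC3
  have hC3t : C3 ≠ ⊤ := by
    have h1 : C3 ≤ C2 + 1 := max_le le_self_add le_add_self
    exact ne_top_of_le_ne_top (ENNReal.add_ne_top.mpr ⟨hC2t, one_ne_top⟩) h1
  have hC30 : C3 ≠ 0 := (lt_of_lt_of_le one_pos (le_max_right C2 1)).ne'
  obtain ⟨n0, hn0⟩ := exists_n0 b μ (s := s) (t := t) hε hV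
  set A : ℕ → Set Pt := fun n => annulus d b (n+1) ∩ Eset b μ s t ε with hA
  have hAmeas : ∀ n, MeasurableSet (A n) := by
    intro n
    refine MeasurableSet.inter ?_ (meas_Eset b μ s t ε)
    exact (measurableSet_le measurable_const
        (continuous_id.dist continuous_const).measurable).inter
      (measurableSet_le (continuous_id.dist continuous_const).measurable measurable_const)
  have hXn : ∀ n : ℕ, (C3 * (ENNReal.ofReal (rn n)) ^ ((d:ℝ) - (s+t))) ≠ 0 ∧
      (C3 * (ENNReal.ofReal (rn n)) ^ ((d:ℝ) - (s+t))) ≠ ⊤ := by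
    intro n
    have h0 : ENNReal.ofReal (rn n) ≠ 0 := (ENNReal.ofReal_pos.mpr (rn_pos n)).ne'
    exact ⟨mul_ne_zero hC30 (rpow_ne_zero' h0 ENNReal.ofReal_ne_top _),
      ENNReal.mul_ne_top hC3t (rpow_ne_top' h0 ENNReal.ofReal_ne_top _)⟩
  set c : ℕ → ℝ≥0∞ := fun n => (C3 * (ENNReal.ofReal (rn n)) ^ ((d:ℝ) - (s+t)))⁻¹ with hc
  set ν : ℕ → Measure Pt := fun n => c n • volume.restrict (A n) with hν
  have hνu : ∀ n, ν n Set.univ = c n * volume (A n) := by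
    intro n
    rw [hν]
    simp [Measure.smul_apply, Measure.restrict_apply_univ, smul_eq_mul]
  have hνc : ∀ n, ν n (A n)ᶜ = 0 := by
    intro n
    rw [hν]
    simp only [Measure.smul_apply, smul_eq_mul,
      Measure.restrict_apply (hAmeas n).compl, Set.compl_inter_self, measure_empty, mul_zero]
  have hνpot : ∀ n a, ∫⁻ x, (ENNReal.ofReal (dist x a)) ^ (-(s+t)) ∂(ν n) ≤ 1 := by
    intro n a
    rw [hν]
    simp only
    rw [lintegral_smul_measure]
    have hsub : A n ⊆ closedBall b (rn n) := fun x hx => mem_closedBall.mpr hx.1.2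
    have hint : ∫⁻ x in A n, (ENNReal.ofReal (dist x a)) ^ (-(s+t)) ∂volume
        ≤ C3 * (ENNReal.ofReal (rn n)) ^ ((d:ℝ) - (s+t)) :=
      le_trans (lintegral_mono_set hsub)
        (le_trans (hC2 (rn n) (rn_pos n) a)
          (mul_le_mul_left (le_max_left _ _) _))
    calc c n * ∫⁻ x in A n, (ENNReal.ofReal (dist x a)) ^ (-(s+t)) ∂volume
        ≤ c n * (C3 * (ENNReal.ofReal (rn n)) ^ ((d:ℝ) - (s+t))) := mul_le_mul_right hint _
      _ = 1 := ENNReal.inv_mul_cancel (hXn n).1 (hXn n).2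
  set VW : ℕ → ℝ≥0∞ := fun n => (2:ℝ≥0∞) ^ ((d:ℝ) * ((n:ℝ)+1)) * volume (A n) with hVW
  have hvolA : ∀ n, volume (A n) = (2:ℝ≥0∞) ^ (-((d:ℝ) * ((n:ℝ)+1))) * VW n := by
    intro n
    rw [hVW]
    rw [← mul_assoc, ← ENNReal.rpow_add _ _ two_ne_zero two_ne_top', neg_add_cancel,
      ENNReal.rpow_zero, one_mul]
  have hVWsmall : ∀ n, VW n ≤ volume (ball (0:Pt) 1) := by
    intro n
    rw [hVW]
    calc (2:ℝ≥0∞) ^ ((d:ℝ) * ((n:ℝ)+1)) * volume (A n)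
        ≤ (2:ℝ≥0∞) ^ ((d:ℝ) * ((n:ℝ)+1)) * volume (closedBall b (rn n)) :=
          mul_le_mul_right (measure_mono (fun x hx => mem_closedBall.mpr hx.1.2)) _
      _ = ((2:ℝ≥0∞) ^ ((d:ℝ) * ((n:ℝ)+1)) * (ENNReal.ofReal (rn n)) ^ ((d:ℝ))) *
          volume (ball (0:Pt) 1) := by
          rw [Measure.addHaar_closedBall volume b (rn_pos n).le, finrank_euclideanSpace_fin,
            ENNReal.ofReal_pow (rn_pos n).le,
            ← ENNReal.rpow_natCast (ENNReal.ofReal (rn n)) d, mul_assoc]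
      _ = volume (ball (0:Pt) 1) := by rw [Wlem n (d:ℝ), one_mul]
  have hVWb : ∀ n, n0 ≤ n → VW n ≤
      C3 * ((∫⁻ p, Maj b s t n p ∂μ) * (2 * (ENNReal.ofReal ε)⁻¹)) := by
    intro n hn
    have habs := absorb b μ hs ht hε hn0 hn (ν n) (hνc n) (hνpot n)
    have hcninv : (c n)⁻¹ = C3 * (ENNReal.ofReal (rn n)) ^ ((d:ℝ) - (s+t)) := by
      rw [hc, inv_inv]
    have hvA : volume (A n) ≤ (c n)⁻¹ * ((ENNReal.ofReal (rn n)) ^ (s+t) *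
        ((∫⁻ p, Maj b s t n p ∂μ) * (2 * (ENNReal.ofReal ε)⁻¹))) := by
      have hev : volume (A n) = (c n)⁻¹ * (ν n Set.univ) := by
        rw [hνu n, ← mul_assoc, ENNReal.inv_mul_cancel ?c0 ?ct, one_mul]
        case c0 => rw [hc]; exact ENNReal.inv_ne_zero.mpr (hXn n).2
        case ct => rw [hc]; exact ENNReal.inv_ne_top.mpr (hXn n).1
      rw [hev]
      exact mul_le_mul_right habs _
    rw [hVW]
    calc (2:ℝ≥0∞) ^ ((d:ℝ) * ((n:ℝ)+1)) * volume (A n)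
        ≤ (2:ℝ≥0∞) ^ ((d:ℝ) * ((n:ℝ)+1)) *
          ((C3 * (ENNReal.ofReal (rn n)) ^ ((d:ℝ) - (s+t))) *
          ((ENNReal.ofReal (rn n)) ^ (s+t) *
            ((∫⁻ p, Maj b s t n p ∂μ) * (2 * (ENNReal.ofReal ε)⁻¹)))) := by
          refine mul_le_mul_right (hvA.trans (le_of_eq ?_)) _
          rw [hcninv]
      _ = ((2:ℝ≥0∞) ^ ((d:ℝ) * ((n:ℝ)+1)) *
          ((ENNReal.ofReal (rn n)) ^ ((d:ℝ) - (s+t)) * (ENNReal.ofReal (rn n)) ^ (s+t))) *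
          (C3 * ((∫⁻ p, Maj b s t n p ∂μ) * (2 * (ENNReal.ofReal ε)⁻¹))) := by ring
      _ = C3 * ((∫⁻ p, Maj b s t n p ∂μ) * (2 * (ENNReal.ofReal ε)⁻¹)) := by
          rw [← ENNReal.rpow_add _ _ ((ENNReal.ofReal_pos.mpr (rn_pos n)).ne')
              ENNReal.ofReal_ne_top,
            show (d:ℝ) - (s+t) + (s+t) = (d:ℝ) from by ring, Wlem n (d:ℝ), one_mul]
  have hVWtsum : (∑' n, VW n) ≠ ⊤ := by
    have hb : ∀ n, VW n ≤ (if n < n0 then volume (ball (0:Pt) 1) else 0)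
        + C3 * ((∫⁻ p, Maj b s t n p ∂μ) * (2 * (ENNReal.ofReal ε)⁻¹)) := by
      intro n
      rcases lt_or_ge n n0 with h | h
      · rw [if_pos h]; exact le_trans (hVWsmall n) le_self_add
      · rw [if_neg (not_lt.mpr h), zero_add]; exact hVWb n h
    refine ne_top_of_le_ne_top ?_ (ENNReal.tsum_le_tsum hb)
    rw [ENNReal.tsum_add]
    refine ENNReal.add_ne_top.mpr ⟨?_, ?_⟩
    · rw [tsum_eq_sum (s := Finset.range n0)
        (fun x hx => if_neg (by simp only [Finset.mem_range] at hx; omega))]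
      have hsum : (∑ x ∈ Finset.range n0, (if x < n0 then volume (ball (0:Pt) 1) else 0))
          ≤ (n0 : ℝ≥0∞) * volume (ball (0:Pt) 1) := by
        calc (∑ x ∈ Finset.range n0, (if x < n0 then volume (ball (0:Pt) 1) else 0))
            ≤ ∑ _x ∈ Finset.range n0, volume (ball (0:Pt) 1) :=
              Finset.sum_le_sum (fun i _ => by split <;> simp)
          _ = (n0 : ℝ≥0∞) * volume (ball (0:Pt) 1) := by
              rw [Finset.sum_const, Finset.card_range, nsmul_eq_mul]
      exact ne_top_of_le_ne_top
        (ENNReal.mul_ne_top (ENNReal.natCast_ne_top n0)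
          (measure_ball_lt_top (x := (0:Pt)) (r := (1:ℝ))).ne) hsum
    · rw [ENNReal.tsum_mul_left, ENNReal.tsum_mul_right]
      exact ENNReal.mul_ne_top hC3t (ENNReal.mul_ne_top
        (ne_top_of_le_ne_top (ENNReal.mul_ne_top (Cmaj_ne_top hs ht) (measure_ne_top μ _))
          (tsum_int_Maj b μ hs ht hV hH))
        (ENNReal.mul_ne_top two_ne_top' (ENNReal.inv_ne_top.mpr hEne)))
  have htail : Tendsto (fun i => ∑' k, VW (k+i)) atTop (nhds 0) :=
    ENNReal.tendsto_sum_nat_add _ hVWtsum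
  have hsingleton : volume ({b} : Set Pt) = 0 := measure_singleton b
  have hcov : ∀ (m : ℕ) (r : ℝ), 0 < r → r ≤ (1/2:ℝ)^(m+2) →
      volume (Eset b μ s t ε ∩ closedBall b r)
        ≤ (2:ℝ≥0∞) ^ (-((d:ℝ) * ((m:ℝ)+2))) * ∑' k, VW (k+(m+1)) := by
    intro m r hr hrm
    have hsub : Eset b μ s t ε ∩ closedBall b r ⊆ {b} ∪ ⋃ k, A (k+(m+1)) := by
      intro a ha
      rcases eq_or_ne a b with rfl | hab
      · exact Or.inl rfl
      right
      have hda : 0 < dist a b := dist_pos.mpr hab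
      have hex : ∃ i : ℕ, (1/2:ℝ)^i < dist a b :=
        exists_pow_lt_of_lt_one hda (by norm_num : (1/2:ℝ) < 1)
      set N := Nat.find hex with hN
      have hNlt : (1/2:ℝ)^N < dist a b := Nat.find_spec hex
      have hdr : dist a b ≤ r := mem_closedBall.mp ha.2
      have hNm : m + 3 ≤ N := by
        by_contra hcon
        push_neg at hcon
        have : (1/2:ℝ)^(m+2) ≤ (1/2)^N :=
          pow_le_pow_of_le_one (by norm_num) (by norm_num) (by omega)
        linarith
      have hup : dist a b ≤ (1/2:ℝ)^(N-1) := by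
        have hmin := Nat.find_min hex (m := N-1) (by omega)
        push_neg at hmin
        exact hmin
      refine Set.mem_iUnion.mpr ⟨N - 2 - (m+1), ?_⟩
      have hidx : N - 2 - (m+1) + (m+1) = N - 2 := by omega
      rw [hidx]
      refine ⟨⟨?_, ?_⟩, ha.1⟩
      · have h1 : N - 2 + 1 + 1 = N := by omega
        rw [h1]
        exact hNlt.le
      · have h2 : N - 2 + 1 = N - 1 := by omega
        rw [h2]
        exact hup
    calc volume (Eset b μ s t ε ∩ closedBall b r)
        ≤ volume ({b} ∪ ⋃ k, A (k+(m+1))) := measure_mono hsub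
      _ ≤ volume ({b} : Set Pt) + volume (⋃ k, A (k+(m+1))) := measure_union_le _ _
      _ ≤ 0 + ∑' k, volume (A (k+(m+1))) :=
          add_le_add (le_of_eq hsingleton) (measure_iUnion_le _)
      _ ≤ ∑' k, (2:ℝ≥0∞) ^ (-((d:ℝ) * ((m:ℝ)+2))) * VW (k+(m+1)) := by
          rw [zero_add]
          refine ENNReal.tsum_le_tsum (fun k => ?_)
          rw [hvolA (k+(m+1))]
          refine mul_le_mul_left ?_ _
          refine ENNReal.rpow_le_rpow_of_exponent_le (by norm_num) ?_
          have hcd : (0:ℝ) ≤ (d:ℝ) := Nat.cast_nonneg d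
          have hmono : (d:ℝ) * ((m:ℝ)+2) ≤ (d:ℝ) * (((k+(m+1):ℕ):ℝ)+1) := by
            refine mul_le_mul_of_nonneg_left ?_ hcd
            push_cast
            linarith [show (0:ℝ) ≤ (k:ℝ) from Nat.cast_nonneg k]
          linarith
      _ = (2:ℝ≥0∞) ^ (-((d:ℝ) * ((m:ℝ)+2))) * ∑' k, VW (k+(m+1)) := ENNReal.tsum_mul_left
  show Tendsto (fun r : ℝ => volume (Eset b μ s t ε ∩ closedBall b r) / ENNReal.ofReal (r ^ d))
    (nhdsWithin 0 (Set.Ioi 0)) (nhds 0)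
  rw [ENNReal.tendsto_nhds_zero]
  intro η hη
  have hc4t : (2:ℝ≥0∞) ^ ((d:ℝ)) ≠ ⊤ := tp_ne_top _
  have htend2 : Tendsto (fun i => (2:ℝ≥0∞) ^ ((d:ℝ)) * ∑' k, VW (k+i)) atTop (nhds 0) := by
    have := ENNReal.Tendsto.const_mul htail (Or.inr hc4t)
    rwa [mul_zero] at this
  obtain ⟨M, hM⟩ := eventually_atTop.mp ((htend2.eventually_lt_const hη).mono
    (fun i h => h.le))
  have hmem : Set.Ioo (0:ℝ) ((1/2:ℝ)^(M+3)) ∈ nhdsWithin (0:ℝ) (Set.Ioi 0) :=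
    Ioo_mem_nhdsGT_of_mem ⟨le_rfl, by positivity⟩
  filter_upwards [hmem] with r hr
  obtain ⟨hr0, hrM⟩ := hr
  have hex := ex_pow_le hr0
  set m' := Nat.find hex with hm'
  have hm'le : (1/2:ℝ)^m' ≤ r := Nat.find_spec hex
  have hm'gt : M + 3 < m' := by
    by_contra hcon
    push_neg at hcon
    have : (1/2:ℝ)^(M+3) ≤ (1/2)^m' :=
      pow_le_pow_of_le_one (by norm_num) (by norm_num) hcon
    linarith
  have hrup : r < (1/2:ℝ)^(m'-1) := by
    have hmin := Nat.find_min hex (m := m'-1) (by omega)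
    push_neg at hmin
    exact hmin
  set m := m' - 3 with hmdef
  have hm'm : m' = m + 3 := by omega
  have hcb : volume (Eset b μ s t ε ∩ closedBall b r)
      ≤ (2:ℝ≥0∞) ^ (-((d:ℝ) * ((m:ℝ)+2))) * ∑' k, VW (k+(m+1)) := by
    refine hcov m r hr0 ?_
    have h12 : m + 2 = m' - 1 := by omega
    rw [h12]
    exact hrup.le
  have hden : (2:ℝ≥0∞) ^ (-((m':ℝ) * (d:ℝ))) ≤ ENNReal.ofReal (r ^ d) := by
    have h1 : ((1/2:ℝ)^m')^d ≤ r^d := pow_le_pow_left₀ (by positivity) hm'le d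
    have h2 : (2:ℝ≥0∞) ^ (-((m':ℝ) * (d:ℝ))) = ENNReal.ofReal (((1/2:ℝ)^m')^d) := by
      rw [← pow_mul, ofReal_half_pow]
      congr 1
      push_cast; ring
    rw [h2]
    exact ENNReal.ofReal_le_ofReal h1
  calc volume (Eset b μ s t ε ∩ closedBall b r) / ENNReal.ofReal (r ^ d)
      ≤ ((2:ℝ≥0∞) ^ (-((d:ℝ) * ((m:ℝ)+2))) * ∑' k, VW (k+(m+1)))
        / (2:ℝ≥0∞) ^ (-((m':ℝ) * (d:ℝ))) := ENNReal.div_le_div hcb hden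
    _ = (2:ℝ≥0∞) ^ ((d:ℝ)) * ∑' k, VW (k+(m+1)) := by
        rw [div_eq_mul_inv, ENNReal.rpow_neg 2 ((m':ℝ)*(d:ℝ)), inv_inv, mul_right_comm,
          ← ENNReal.rpow_add _ _ two_ne_zero two_ne_top']
        congr 2
        rw [hm'm]
        push_cast; ring
    _ ≤ η := hM (m+1) (by omega)

end DLW

/-- the double-layer Riesz potential estimate. -/
theorem double_layer_wiener (d : ℕ) (b : EuclideanSpace ℝ (Fin d))
    (μ : Measure (EuclideanSpace ℝ (Fin d) × EuclideanSpace ℝ (Fin d))) [IsFiniteMeasure μ]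
    (hK : ∃ K, IsCompact K ∧ μ Kᶜ = 0)
    (hV : μ {p | p.1 = b} = 0) (hH : μ {p | p.2 = b} = 0)
    (s t : ℝ) (hs : 0 < s) (ht : 0 < t) (hstd : s + t < d) (ε : ℝ) (hε : 0 < ε) :
    (∑' n : ℕ, (2 : ℝ≥0∞) ^ ((s + t) * ((n : ℝ) + 1)) *
        rieszCap d (s + t) (annulus d b (n + 1) ∩
          {a | ENNReal.ofReal ε ≤ (ENNReal.ofReal (dist a b)) ^ (s + t) *
            ∫⁻ p, (ENNReal.ofReal (dist p.1 a)) ^ (-s) *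
              (ENNReal.ofReal (dist p.2 a)) ^ (-t) ∂μ}) ≠ ⊤) ∧
    DensityZeroAt d
      {a | ENNReal.ofReal ε ≤ (ENNReal.ofReal (dist a b)) ^ (s + t) *
        ∫⁻ p, (ENNReal.ofReal (dist p.1 a)) ^ (-s) *
          (ENNReal.ofReal (dist p.2 a)) ^ (-t) ∂μ} b := by
  constructor
  · exact DLW.part1 b μ hs ht hε hV hH
  · exact DLW.part2 b μ hs ht hε hstd hV hH
end

section
/- Let b ∈ ℝ^d and let μ be a finite positive measure on ℝ^d × ℝ^d with compact support and no point mass at (b, b). Let s, t > 0, 0 < u < min(1, s, t), and s + t - u < d. Then for every ε > 0 the set E = {a : |a-b|^{s+t-u} · ∫∫ |x-y|^u dμ(x,y)/(|x-a|^s |y-a|^t) ≥ ε} has Lebesgue density zero at b. -/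
open MeasureTheory Metric Filter ENNReal

/-- The double-layer Riesz potential with kernel factor |x-y|^u. -/
noncomputable def doublePotential (d : ℕ) (s t u : ℝ)
    (μ : Measure (EuclideanSpace ℝ (Fin d) × EuclideanSpace ℝ (Fin d)))
    (a : EuclideanSpace ℝ (Fin d)) : ℝ≥0∞ :=
  ∫⁻ p, (ENNReal.ofReal (dist p.1 p.2)) ^ u *
    ((ENNReal.ofReal (dist p.1 a)) ^ (-s) * (ENNReal.ofReal (dist p.2 a)) ^ (-t)) ∂μ

lemma DLZ.rpow_le_rpow_neg {x y : ℝ≥0∞} (hxy : x ≤ y) {c : ℝ} (hc : c ≤ 0) :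
    y ^ c ≤ x ^ c := by
  calc y ^ c = (y ^ (-c))⁻¹ := by rw [← ENNReal.rpow_neg, neg_neg]
    _ ≤ (x ^ (-c))⁻¹ := ENNReal.inv_le_inv.mpr (ENNReal.rpow_le_rpow hxy (neg_nonneg.mpr hc))
    _ = x ^ c := by rw [← ENNReal.rpow_neg, neg_neg]

lemma DLZ.real_id {r : ℝ} (hr : 0 < r) (β : ℝ) (d n : ℕ) :
    (r / 2 ^ (n + 1)) ^ (-β) * (r / 2 ^ n) ^ (d : ℕ) =
      r ^ ((d : ℝ) - β) * 2 ^ β * ((2 : ℝ) ^ (β - (d : ℝ))) ^ n := by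
  have h2 : (0:ℝ) < 2 := by norm_num
  have hp1 : (0:ℝ) < 2 ^ (n+1) := by positivity
  have hpn : (0:ℝ) < 2 ^ n := by positivity
  rw [← Real.rpow_natCast (r / 2 ^ n) d, ← Real.rpow_natCast ((2:ℝ) ^ (β - (d:ℝ))) n,
    Real.div_rpow hr.le hp1.le, Real.div_rpow hr.le hpn.le,
    ← Real.rpow_natCast (2:ℝ) (n+1), ← Real.rpow_natCast (2:ℝ) n,
    ← Real.rpow_mul h2.le, ← Real.rpow_mul h2.le, ← Real.rpow_mul h2.le,
    div_mul_div_comm, ← Real.rpow_add hr, ← Real.rpow_add h2,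
    mul_assoc, ← Real.rpow_add h2, div_eq_mul_inv, ← Real.rpow_neg h2.le]
  congr 1
  · congr 1
    push_cast; ring
  · push_cast; ring

/-- Centered ball kernel bound. -/
lemma DLZ.A0 (d : ℕ) (β : ℝ) (hβ0 : 0 < β) (hβd : β < d) :
    ∃ C : ℝ≥0∞, C ≠ ∞ ∧ ∀ (x : EuclideanSpace ℝ (Fin d)) (r : ℝ), 0 < r →
      ∫⁻ a in closedBall x r, (ENNReal.ofReal (dist x a)) ^ (-β) ≤
        C * ENNReal.ofReal (r ^ ((d : ℝ) - β)) := by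
  have hd0 : (0:ℝ) < d := hβ0.trans hβd
  have hdnat : 0 < d := by exact_mod_cast hd0
  set κ := volume (ball (0 : EuclideanSpace ℝ (Fin d)) 1) with hκdef
  have hκ : κ ≠ ∞ := measure_ball_lt_top.ne
  set q : ℝ≥0∞ := ENNReal.ofReal ((2:ℝ) ^ (β - (d:ℝ))) with hqdef
  have hq1 : q < 1 := by
    rw [hqdef, ← ENNReal.ofReal_one]
    exact ENNReal.ofReal_lt_ofReal_iff_of_nonneg (by positivity) |>.mpr
      (Real.rpow_lt_one_of_one_lt_of_neg (by norm_num) (by linarith))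
  refine ⟨ENNReal.ofReal ((2:ℝ) ^ β) * κ * (1 - q)⁻¹, ?_, ?_⟩
  · refine ENNReal.mul_ne_top (ENNReal.mul_ne_top ENNReal.ofReal_ne_top hκ) ?_
    simp [ENNReal.inv_ne_top, tsub_eq_zero_iff_le, hq1.not_ge]
  intro x r hr
  set g : EuclideanSpace ℝ (Fin d) → ℝ≥0∞ := fun a => (ENNReal.ofReal (dist x a)) ^ (-β)
    with hgdef
  set A : ℕ → Set (EuclideanSpace ℝ (Fin d)) :=
    fun n => closedBall x (r / 2 ^ n) \ closedBall x (r / 2 ^ (n + 1)) with hAdef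
  have hsub : closedBall x r ⊆ {x} ∪ ⋃ n, A n := by
    intro a ha
    rcases eq_or_ne a x with h | h
    · exact Or.inl (by simp [h])
    right
    have hpos : 0 < dist a x := dist_pos.mpr h
    have hle : dist a x ≤ r := mem_closedBall.mp ha
    have hex : ∃ n, r / 2 ^ (n + 1) < dist a x := by
      obtain ⟨n, hn⟩ := exists_pow_lt_of_lt_one (div_pos hpos hr)
        (by norm_num : (1:ℝ)/2 < 1)
      refine ⟨n, ?_⟩
      have h1 : ((1:ℝ)/2) ^ (n+1) < (1/2) ^ n := by
        apply pow_lt_pow_right_of_lt_one₀ <;> norm_num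
      have h2 : r * ((1/2:ℝ) ^ (n+1)) < r * (dist a x / r) :=
        mul_lt_mul_of_pos_left (h1.trans hn) hr
      rw [mul_div_cancel₀ _ hr.ne'] at h2
      calc r / 2 ^ (n+1) = r * ((1/2:ℝ) ^ (n+1)) := by rw [div_pow, one_pow]; ring
        _ < dist a x := h2
    refine Set.mem_iUnion.mpr ⟨Nat.find hex, ?_, ?_⟩
    · rcases Nat.eq_zero_or_pos (Nat.find hex) with h0 | h0
      · rw [h0]; simpa using hle
      · obtain ⟨k, hk⟩ := Nat.exists_eq_succ_of_ne_zero h0.ne'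
        have := Nat.find_min hex (m := k) (by omega)
        rw [hk]; exact mem_closedBall.mpr (by push_neg at this; simpa using this)
    · exact fun hmem => absurd (mem_closedBall.mp hmem) (not_le.mpr (Nat.find_spec hex))
  have hx0 : volume ({x} : Set (EuclideanSpace ℝ (Fin d))) = 0 := by
    have h1 : ({x} : Set (EuclideanSpace ℝ (Fin d))) ⊆ closedBall x 0 := by simp
    refine measure_mono_null h1 ?_
    rw [volume.addHaar_closedBall x le_rfl]
    simp [zero_pow, finrank_euclideanSpace_fin, hdnat.ne']
  have hAn : ∀ n : ℕ, ∫⁻ a in A n, g a ∂volume ≤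
      ENNReal.ofReal ((r / 2 ^ (n+1)) ^ (-β)) * (ENNReal.ofReal ((r / 2 ^ n) ^ (d:ℕ)) * κ) := by
    intro n
    have hc : ∀ a ∈ A n, g a ≤ ENNReal.ofReal ((r / 2 ^ (n+1)) ^ (-β)) := by
      intro a ha
      have h1 : r / 2 ^ (n+1) < dist a x := by
        by_contra hcon
        exact ha.2 (mem_closedBall.mpr (not_lt.mp hcon))
      have h2 : (0:ℝ) < r / 2 ^ (n+1) := by positivity
      rw [hgdef]
      calc (ENNReal.ofReal (dist x a)) ^ (-β)
          ≤ (ENNReal.ofReal (r / 2 ^ (n+1))) ^ (-β) := by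
            refine DLZ.rpow_le_rpow_neg ?_ (by linarith)
            exact ENNReal.ofReal_le_ofReal (by rw [dist_comm]; exact h1.le)
        _ = ENNReal.ofReal ((r / 2 ^ (n+1)) ^ (-β)) := ENNReal.ofReal_rpow_of_pos h2
    have hAmeas : MeasurableSet (A n) :=
      measurableSet_closedBall.diff measurableSet_closedBall
    calc ∫⁻ a in A n, g a ∂volume
        ≤ ∫⁻ _ in A n, ENNReal.ofReal ((r / 2 ^ (n+1)) ^ (-β)) ∂volume := by
          refine setLIntegral_mono' hAmeas hc
      _ = ENNReal.ofReal ((r / 2 ^ (n+1)) ^ (-β)) * volume (A n) := setLIntegral_const _ _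
      _ ≤ _ := by
          refine mul_le_mul_right ?_ _
          calc volume (A n) ≤ volume (closedBall x (r / 2 ^ n)) :=
                measure_mono Set.diff_subset
            _ = ENNReal.ofReal ((r / 2 ^ n) ^ (d:ℕ)) * κ := by
                rw [volume.addHaar_closedBall x (by positivity : (0:ℝ) ≤ r / 2 ^ n)]
                rw [finrank_euclideanSpace_fin]
      _ = _ := rfl
  calc ∫⁻ a in closedBall x r, g a ∂volume
      ≤ ∫⁻ a in {x} ∪ ⋃ n, A n, g a ∂volume := lintegral_mono_set hsub
    _ ≤ ∫⁻ a in {x}, g a ∂volume + ∫⁻ a in ⋃ n, A n, g a ∂volume := lintegral_union_le _ _ _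
    _ ≤ 0 + ∑' n, ∫⁻ a in A n, g a ∂volume := by
        gcongr
        · exact (setLIntegral_measure_zero _ _ hx0).le
        · exact lintegral_iUnion_le _ _
    _ ≤ ∑' n : ℕ, ENNReal.ofReal ((r / 2 ^ (n+1)) ^ (-β)) *
          (ENNReal.ofReal ((r / 2 ^ n) ^ (d:ℕ)) * κ) := by
        rw [zero_add]; exact ENNReal.tsum_le_tsum hAn
    _ = ∑' n : ℕ, ENNReal.ofReal (r ^ ((d:ℝ) - β) * 2 ^ β * ((2:ℝ) ^ (β - (d:ℝ))) ^ n) * κ := by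
        congr 1; funext n
        rw [← mul_assoc, ← ENNReal.ofReal_mul (by positivity), DLZ.real_id hr]
    _ = ENNReal.ofReal ((2:ℝ) ^ β) * κ * (1 - q)⁻¹ * ENNReal.ofReal (r ^ ((d:ℝ) - β)) := by
        have : ∀ n : ℕ, ENNReal.ofReal (r ^ ((d:ℝ) - β) * 2 ^ β * ((2:ℝ) ^ (β - (d:ℝ))) ^ n) * κ
            = (ENNReal.ofReal (r ^ ((d:ℝ) - β)) * ENNReal.ofReal ((2:ℝ) ^ β) * κ) * q ^ n := by
          intro n
          rw [ENNReal.ofReal_mul (by positivity), ENNReal.ofReal_mul (by positivity),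
            ENNReal.ofReal_pow (by positivity), hqdef]
          ring
        rw [tsum_congr this, ENNReal.tsum_mul_left, ENNReal.tsum_geometric]
        ring

/-- Ball kernel bound, arbitrary pole. -/
lemma DLZ.A1 (d : ℕ) (β : ℝ) (hβ0 : 0 < β) (hβd : β < d) :
    ∃ C : ℝ≥0∞, C ≠ ∞ ∧ ∀ (x c : EuclideanSpace ℝ (Fin d)) (r : ℝ), 0 < r →
      ∫⁻ a in closedBall c r, (ENNReal.ofReal (dist x a)) ^ (-β) ≤
        C * ENNReal.ofReal (r ^ ((d : ℝ) - β)) := by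
  obtain ⟨C0, hC0, h0⟩ := DLZ.A0 d β hβ0 hβd
  have hd0 : (0:ℝ) < d := hβ0.trans hβd
  have hdnat : 0 < d := by exact_mod_cast hd0
  set κ := volume (ball (0 : EuclideanSpace ℝ (Fin d)) 1) with hκdef
  have hκ : κ ≠ ∞ := measure_ball_lt_top.ne
  refine ⟨C0 * ENNReal.ofReal ((3:ℝ) ^ ((d:ℝ) - β)) + κ, by
    exact ENNReal.add_ne_top.mpr ⟨ENNReal.mul_ne_top hC0 ENNReal.ofReal_ne_top, hκ⟩, ?_⟩
  intro x c r hr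
  rcases le_or_gt (dist x c) (2 * r) with hxc | hxc
  · -- near case: closedBall c r ⊆ closedBall x (3r)
    have hsub : closedBall c r ⊆ closedBall x (3 * r) := by
      intro a ha
      have : dist a x ≤ dist a c + dist c x := dist_triangle a c x
      rw [mem_closedBall] at ha ⊢
      rw [dist_comm c x] at this
      linarith [ha, hxc, this]
    calc ∫⁻ a in closedBall c r, (ENNReal.ofReal (dist x a)) ^ (-β)
        ≤ ∫⁻ a in closedBall x (3 * r), (ENNReal.ofReal (dist x a)) ^ (-β) :=
          lintegral_mono_set hsub
      _ ≤ C0 * ENNReal.ofReal ((3 * r) ^ ((d:ℝ) - β)) := h0 x (3 * r) (by linarith)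
      _ = C0 * ENNReal.ofReal ((3:ℝ) ^ ((d:ℝ) - β)) * ENNReal.ofReal (r ^ ((d:ℝ) - β)) := by
          rw [Real.mul_rpow (by norm_num) hr.le, ENNReal.ofReal_mul (by positivity), mul_assoc]
      _ ≤ _ := by
          exact mul_le_mul_left le_self_add _
  · -- far case: dist x a > r on the ball
    have hb : ∀ a ∈ closedBall c r, (ENNReal.ofReal (dist x a)) ^ (-β) ≤
        ENNReal.ofReal (r ^ (-β)) := by
      intro a ha
      have h1 : r < dist x a := by
        have := dist_triangle x a c
        rw [mem_closedBall, dist_comm] at ha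
        rw [dist_comm a c] at this
        linarith
      calc (ENNReal.ofReal (dist x a)) ^ (-β) ≤ (ENNReal.ofReal r) ^ (-β) :=
            DLZ.rpow_le_rpow_neg (ENNReal.ofReal_le_ofReal h1.le) (by linarith)
        _ = ENNReal.ofReal (r ^ (-β)) := ENNReal.ofReal_rpow_of_pos hr
    calc ∫⁻ a in closedBall c r, (ENNReal.ofReal (dist x a)) ^ (-β)
        ≤ ∫⁻ _ in closedBall c r, ENNReal.ofReal (r ^ (-β)) :=
          setLIntegral_mono' measurableSet_closedBall hb
      _ = ENNReal.ofReal (r ^ (-β)) * volume (closedBall c r) := setLIntegral_const _ _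
      _ = ENNReal.ofReal (r ^ (-β)) * (ENNReal.ofReal (r ^ (d:ℕ)) * κ) := by
          rw [volume.addHaar_closedBall c hr.le, finrank_euclideanSpace_fin]
      _ = κ * ENNReal.ofReal (r ^ ((d:ℝ) - β)) := by
          rw [← mul_assoc, ← ENNReal.ofReal_mul (by positivity)]
          rw [← Real.rpow_natCast r d, ← Real.rpow_add hr]
          ring_nf
      _ ≤ _ := mul_le_mul_left le_add_self _

lemma DLZ.rpow_add_neg {x : ℝ≥0∞} (hx : x ≠ ∞) {p q : ℝ} (hp : p < 0) (hq : q < 0) :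
    x ^ (p + q) = x ^ p * x ^ q := by
  rcases eq_or_ne x 0 with h | h
  · rw [h, ENNReal.zero_rpow_of_neg (by linarith), ENNReal.zero_rpow_of_neg hp,
      ENNReal.zero_rpow_of_neg hq, ENNReal.top_mul_top]
  · exact ENNReal.rpow_add p q h hx

lemma DLZ.ker_ptwise {d : ℕ} {s t u : ℝ} (hu0 : 0 < u) (hus : u < s) (hut : u < t)
    (x y a : EuclideanSpace ℝ (Fin d)) :
    (ENNReal.ofReal (dist x y)) ^ u *
      ((ENNReal.ofReal (dist x a)) ^ (-s) * (ENNReal.ofReal (dist y a)) ^ (-t)) ≤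
    (2:ℝ≥0∞) ^ u * ((ENNReal.ofReal (dist x a)) ^ (-(s + t - u)) +
      (ENNReal.ofReal (dist y a)) ^ (-(s + t - u))) := by
  set Dxy := ENNReal.ofReal (dist x y) with hDxy
  set Dxa := ENNReal.ofReal (dist x a) with hDxa
  set Dya := ENNReal.ofReal (dist y a) with hDya
  rcases eq_or_lt_of_le (dist_nonneg : (0:ℝ) ≤ dist x y) with h0 | h0
  · rw [hDxy, ← h0, ENNReal.ofReal_zero, ENNReal.zero_rpow_of_pos hu0, zero_mul]
    exact zero_le
  rcases le_total (dist x a) (dist y a) with hc | hc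
  · -- dist x a ≤ dist y a; dist x y ≤ 2 dist y a
    have htri : dist x y ≤ 2 * dist y a := by
      have := dist_triangle x a y
      rw [dist_comm a y] at this
      linarith
    have hya0 : Dya ≠ 0 := by
      rw [hDya]; simp only [ne_eq, ENNReal.ofReal_eq_zero, not_le]; linarith
    have h2d : ENNReal.ofReal (2 * dist y a) = 2 * Dya := by
      rw [ENNReal.ofReal_mul (by norm_num), ENNReal.ofReal_ofNat, hDya]
    have hcalc : Dxy ^ u * (Dxa ^ (-s) * Dya ^ (-t)) ≤
        (2:ℝ≥0∞) ^ u * (Dxa ^ (-(s + t - u))) := by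
      calc Dxy ^ u * (Dxa ^ (-s) * Dya ^ (-t))
          ≤ ((2:ℝ≥0∞) * Dya) ^ u * (Dxa ^ (-s) * Dya ^ (-t)) := by
            refine mul_le_mul_left (ENNReal.rpow_le_rpow ?_ hu0.le) _
            rw [hDxy, ← h2d]
            exact ENNReal.ofReal_le_ofReal htri
        _ = (2:ℝ≥0∞) ^ u * (Dxa ^ (-s) * (Dya ^ u * Dya ^ (-t))) := by
            rw [ENNReal.mul_rpow_of_nonneg _ _ hu0.le]; ring
        _ = (2:ℝ≥0∞) ^ u * (Dxa ^ (-s) * Dya ^ (u - t)) := by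
            rw [← ENNReal.rpow_add u (-t) hya0 ENNReal.ofReal_ne_top, sub_eq_add_neg]
        _ ≤ (2:ℝ≥0∞) ^ u * (Dxa ^ (-s) * Dxa ^ (u - t)) := by
            refine mul_le_mul_right (mul_le_mul_right ?_ _) _
            exact DLZ.rpow_le_rpow_neg (ENNReal.ofReal_le_ofReal hc) (by linarith)
        _ = (2:ℝ≥0∞) ^ u * (Dxa ^ (-(s + t - u))) := by
            rw [← DLZ.rpow_add_neg ENNReal.ofReal_ne_top (by linarith : -s < 0)
              (by linarith : u - t < 0)]
            ring_nf
            rfl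
    exact hcalc.trans (mul_le_mul_right le_self_add _)
  · -- dist y a ≤ dist x a; dist x y ≤ 2 dist x a
    have htri : dist x y ≤ 2 * dist x a := by
      have := dist_triangle x a y
      rw [dist_comm a y] at this
      linarith
    have hxa0 : Dxa ≠ 0 := by
      rw [hDxa]; simp only [ne_eq, ENNReal.ofReal_eq_zero, not_le]; linarith
    have h2d : ENNReal.ofReal (2 * dist x a) = 2 * Dxa := by
      rw [ENNReal.ofReal_mul (by norm_num), ENNReal.ofReal_ofNat, hDxa]
    have hcalc : Dxy ^ u * (Dxa ^ (-s) * Dya ^ (-t)) ≤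
        (2:ℝ≥0∞) ^ u * (Dya ^ (-(s + t - u))) := by
      calc Dxy ^ u * (Dxa ^ (-s) * Dya ^ (-t))
          ≤ ((2:ℝ≥0∞) * Dxa) ^ u * (Dxa ^ (-s) * Dya ^ (-t)) := by
            refine mul_le_mul_left (ENNReal.rpow_le_rpow ?_ hu0.le) _
            rw [hDxy, ← h2d]
            exact ENNReal.ofReal_le_ofReal htri
        _ = (2:ℝ≥0∞) ^ u * ((Dxa ^ u * Dxa ^ (-s)) * Dya ^ (-t)) := by
            rw [ENNReal.mul_rpow_of_nonneg _ _ hu0.le]; ring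
        _ = (2:ℝ≥0∞) ^ u * (Dxa ^ (u - s) * Dya ^ (-t)) := by
            rw [← ENNReal.rpow_add u (-s) hxa0 ENNReal.ofReal_ne_top, sub_eq_add_neg]
        _ ≤ (2:ℝ≥0∞) ^ u * (Dya ^ (u - s) * Dya ^ (-t)) := by
            refine mul_le_mul_right (mul_le_mul_left ?_ _) _
            exact DLZ.rpow_le_rpow_neg (ENNReal.ofReal_le_ofReal hc) (by linarith)
        _ = (2:ℝ≥0∞) ^ u * (Dya ^ (-(s + t - u))) := by
            rw [← DLZ.rpow_add_neg ENNReal.ofReal_ne_top (by linarith : u - s < 0)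
              (by linarith : -t < 0)]
            ring_nf
            rfl
    exact hcalc.trans (mul_le_mul_right le_add_self _)

lemma DLZ.meas_kernel {d : ℕ} (x : EuclideanSpace ℝ (Fin d)) (c : ℝ) :
    Measurable fun a : EuclideanSpace ℝ (Fin d) => (ENNReal.ofReal (dist x a)) ^ c :=
  (ENNReal.continuous_rpow_const.measurable).comp
    (ENNReal.measurable_ofReal.comp (measurable_const.dist measurable_id))

lemma DLZ.B (d : ℕ) (s t u : ℝ) (hu0 : 0 < u) (hus : u < s) (hut : u < t)
    (hstd : s + t - u < d) :
    ∃ C : ℝ≥0∞, C ≠ ∞ ∧ ∀ (b : EuclideanSpace ℝ (Fin d)) (r : ℝ), 0 < r →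
      ∀ x y : EuclideanSpace ℝ (Fin d),
      ∫⁻ a in closedBall b r, (ENNReal.ofReal (dist x y)) ^ u *
        ((ENNReal.ofReal (dist x a)) ^ (-s) * (ENNReal.ofReal (dist y a)) ^ (-t)) ≤
      C * ENNReal.ofReal (r ^ ((d:ℝ) - (s + t - u))) := by
  obtain ⟨C1, hC1, h1⟩ := DLZ.A1 d (s + t - u) (by linarith) hstd
  have h2top : ((2:ℝ≥0∞) ^ u) ≠ ∞ :=
    ENNReal.rpow_ne_top_of_nonneg hu0.le (by norm_num)
  refine ⟨(2:ℝ≥0∞) ^ u * (C1 + C1), ENNReal.mul_ne_top h2top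
    (ENNReal.add_ne_top.mpr ⟨hC1, hC1⟩), ?_⟩
  intro b r hr x y
  calc ∫⁻ a in closedBall b r, (ENNReal.ofReal (dist x y)) ^ u *
        ((ENNReal.ofReal (dist x a)) ^ (-s) * (ENNReal.ofReal (dist y a)) ^ (-t))
      ≤ ∫⁻ a in closedBall b r, (2:ℝ≥0∞) ^ u * ((ENNReal.ofReal (dist x a)) ^ (-(s + t - u)) +
          (ENNReal.ofReal (dist y a)) ^ (-(s + t - u))) :=
        lintegral_mono fun a => DLZ.ker_ptwise hu0 hus hut x y a
    _ = (2:ℝ≥0∞) ^ u * ∫⁻ a in closedBall b r, ((ENNReal.ofReal (dist x a)) ^ (-(s + t - u)) +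
          (ENNReal.ofReal (dist y a)) ^ (-(s + t - u))) := lintegral_const_mul' _ _ h2top
    _ = (2:ℝ≥0∞) ^ u * ((∫⁻ a in closedBall b r, (ENNReal.ofReal (dist x a)) ^ (-(s + t - u))) +
          ∫⁻ a in closedBall b r, (ENNReal.ofReal (dist y a)) ^ (-(s + t - u))) := by
        rw [lintegral_add_left (DLZ.meas_kernel x _)]
    _ ≤ (2:ℝ≥0∞) ^ u * (C1 * ENNReal.ofReal (r ^ ((d:ℝ) - (s + t - u))) +
          C1 * ENNReal.ofReal (r ^ ((d:ℝ) - (s + t - u)))) :=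
        mul_le_mul_right (add_le_add (h1 x b r hr) (h1 y b r hr)) _
    _ = (2:ℝ≥0∞) ^ u * (C1 + C1) * ENNReal.ofReal (r ^ ((d:ℝ) - (s + t - u))) := by ring

lemma DLZ.sigma_eq {r : ℝ} (hr : 0 < r) (α : ℝ) (d : ℕ) :
    ENNReal.ofReal (r ^ α) / ENNReal.ofReal (r ^ d) = ENNReal.ofReal (r ^ (α - (d:ℝ))) := by
  rw [← ENNReal.ofReal_div_of_pos (by positivity), ← Real.rpow_natCast r d, ← Real.rpow_sub hr]

lemma DLZ.tendsto_ofReal_rpow {c : ℝ} (hc : 0 < c) (M : ℝ≥0∞) (hM : M ≠ ∞) :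
    Tendsto (fun r : ℝ => M * ENNReal.ofReal (r ^ c)) (nhdsWithin 0 (Set.Ioi 0)) (nhds 0) := by
  have h1 : Tendsto (fun r : ℝ => r ^ c) (nhdsWithin 0 (Set.Ioi 0)) (nhds 0) := by
    have := (Real.continuousAt_rpow_const 0 c (Or.inr hc.le)).tendsto
    rw [Real.zero_rpow hc.ne'] at this
    exact this.mono_left nhdsWithin_le_nhds
  have h2 : Tendsto (fun r : ℝ => ENNReal.ofReal (r ^ c)) (nhdsWithin 0 (Set.Ioi 0)) (nhds 0) := by
    simpa [Function.comp_def] using (ENNReal.continuous_ofReal.tendsto 0).comp h1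
  simpa using ENNReal.Tendsto.const_mul h2 (Or.inr hM)

lemma DLZ.decay (d : ℕ) (b : EuclideanSpace ℝ (Fin d)) (s t u : ℝ)
    (hs : 0 < s) (ht : 0 < t) (hu0 : 0 < u) (hus : u < s) (hut : u < t)
    (hstd : s + t - u < d) (x y : EuclideanSpace ℝ (Fin d)) :
    Tendsto (fun r : ℝ => (ENNReal.ofReal (r ^ (s + t - u)) / ENNReal.ofReal (r ^ d)) *
      ∫⁻ a in closedBall b r, (ENNReal.ofReal (dist x y)) ^ u *
        ((ENNReal.ofReal (dist x a)) ^ (-s) * (ENNReal.ofReal (dist y a)) ^ (-t)))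
      (nhdsWithin 0 (Set.Ioi 0)) (nhds 0) := by
  have hta : t < s + t - u := by linarith
  have hsa : s < s + t - u := by linarith
  by_cases hx : x = b
  · by_cases hy : y = b
    · rw [hx, hy]
      have hz : ∀ a : EuclideanSpace ℝ (Fin d),
          (ENNReal.ofReal (dist b b)) ^ u *
            ((ENNReal.ofReal (dist b a)) ^ (-s) * (ENNReal.ofReal (dist b a)) ^ (-t)) = 0 := by
        intro a
        rw [dist_self, ENNReal.ofReal_zero, ENNReal.zero_rpow_of_pos hu0, zero_mul]
      simp only [hz, lintegral_zero, mul_zero]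
      exact tendsto_const_nhds
    · -- x = b, y ≠ b : bound the y-factor, integrate the x-factor
      rw [hx]
      set δ := dist y b / 2 with hδdef
      have hδ : 0 < δ := by
        have := dist_pos.mpr hy
        rw [hδdef]; linarith
      obtain ⟨Cs, hCs, hsub⟩ := DLZ.A1 d s hs (by linarith : s < (d:ℝ))
      set K := (ENNReal.ofReal (dist b y)) ^ u * ENNReal.ofReal (δ ^ (-t)) * Cs with hK
      have hKne : K ≠ ∞ := ENNReal.mul_ne_top (ENNReal.mul_ne_top
        (ENNReal.rpow_ne_top_of_nonneg hu0.le ENNReal.ofReal_ne_top)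
        ENNReal.ofReal_ne_top) hCs
      refine tendsto_of_tendsto_of_tendsto_of_le_of_le' tendsto_const_nhds
        (DLZ.tendsto_ofReal_rpow (by linarith : 0 < t - u) K hKne)
        (Eventually.of_forall fun r => zero_le) ?_
      filter_upwards [Ioo_mem_nhdsGT_of_mem (by constructor <;> [exact le_rfl; exact hδ] :
        (0:ℝ) ∈ Set.Ico 0 δ)] with r hr
      obtain ⟨hr0, hrδ⟩ := hr
      have hptw : ∀ a ∈ closedBall b r,
          (ENNReal.ofReal (dist b y)) ^ u *
            ((ENNReal.ofReal (dist b a)) ^ (-s) * (ENNReal.ofReal (dist y a)) ^ (-t)) ≤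
          ((ENNReal.ofReal (dist b y)) ^ u * ENNReal.ofReal (δ ^ (-t))) *
            (ENNReal.ofReal (dist b a)) ^ (-s) := by
        intro a ha
        have hya : δ ≤ dist y a := by
          have h1 := dist_triangle y a b
          rw [mem_closedBall] at ha
          have h2 : dist y b = 2 * δ := by rw [hδdef]; ring
          linarith
        have : (ENNReal.ofReal (dist y a)) ^ (-t) ≤ ENNReal.ofReal (δ ^ (-t)) := by
          rw [← ENNReal.ofReal_rpow_of_pos hδ]
          exact DLZ.rpow_le_rpow_neg (ENNReal.ofReal_le_ofReal hya) (by linarith)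
        calc (ENNReal.ofReal (dist b y)) ^ u *
            ((ENNReal.ofReal (dist b a)) ^ (-s) * (ENNReal.ofReal (dist y a)) ^ (-t))
            ≤ (ENNReal.ofReal (dist b y)) ^ u *
              ((ENNReal.ofReal (dist b a)) ^ (-s) * ENNReal.ofReal (δ ^ (-t))) :=
              mul_le_mul_right (mul_le_mul_right this _) _
          _ = ((ENNReal.ofReal (dist b y)) ^ u * ENNReal.ofReal (δ ^ (-t))) *
              (ENNReal.ofReal (dist b a)) ^ (-s) := by ring
      calc (ENNReal.ofReal (r ^ (s + t - u)) / ENNReal.ofReal (r ^ d)) *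
          ∫⁻ a in closedBall b r, (ENNReal.ofReal (dist b y)) ^ u *
            ((ENNReal.ofReal (dist b a)) ^ (-s) * (ENNReal.ofReal (dist y a)) ^ (-t))
          ≤ ENNReal.ofReal (r ^ ((s + t - u) - (d:ℝ))) *
            (((ENNReal.ofReal (dist b y)) ^ u * ENNReal.ofReal (δ ^ (-t))) *
              ∫⁻ a in closedBall b r, (ENNReal.ofReal (dist b a)) ^ (-s)) := by
            rw [DLZ.sigma_eq hr0, ← lintegral_const_mul' _ _ (ENNReal.mul_ne_top
              (ENNReal.rpow_ne_top_of_nonneg hu0.le ENNReal.ofReal_ne_top)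
              ENNReal.ofReal_ne_top)]
            exact mul_le_mul_right (setLIntegral_mono' measurableSet_closedBall hptw) _
        _ ≤ ENNReal.ofReal (r ^ ((s + t - u) - (d:ℝ))) *
            (((ENNReal.ofReal (dist b y)) ^ u * ENNReal.ofReal (δ ^ (-t))) *
              (Cs * ENNReal.ofReal (r ^ ((d:ℝ) - s)))) := by
            exact mul_le_mul_right (mul_le_mul_right (hsub b b r hr0) _) _
        _ = K * ENNReal.ofReal (r ^ (t - u)) := by
            rw [hK]
            rw [show ENNReal.ofReal (r ^ ((s + t - u) - (d:ℝ))) *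
              ((ENNReal.ofReal (dist b y)) ^ u * ENNReal.ofReal (δ ^ (-t)) *
                (Cs * ENNReal.ofReal (r ^ ((d:ℝ) - s)))) =
              ((ENNReal.ofReal (dist b y)) ^ u * ENNReal.ofReal (δ ^ (-t)) * Cs) *
                (ENNReal.ofReal (r ^ ((s + t - u) - (d:ℝ))) *
                  ENNReal.ofReal (r ^ ((d:ℝ) - s))) by ring]
            congr 1
            rw [← ENNReal.ofReal_mul (by positivity), ← Real.rpow_add hr0]
            ring_nf
  · -- x ≠ b : bound the x-factor, integrate the y-factor
    set δ := dist x b / 2 with hδdef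
    have hδ : 0 < δ := by
      have := dist_pos.mpr hx
      rw [hδdef]; linarith
    obtain ⟨Ct, hCt, htsub⟩ := DLZ.A1 d t ht (by linarith : t < (d:ℝ))
    set K := (ENNReal.ofReal (dist x y)) ^ u * ENNReal.ofReal (δ ^ (-s)) * Ct with hK
    have hKne : K ≠ ∞ := ENNReal.mul_ne_top (ENNReal.mul_ne_top
      (ENNReal.rpow_ne_top_of_nonneg hu0.le ENNReal.ofReal_ne_top)
      ENNReal.ofReal_ne_top) hCt
    refine tendsto_of_tendsto_of_tendsto_of_le_of_le' tendsto_const_nhds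
      (DLZ.tendsto_ofReal_rpow (by linarith : 0 < s - u) K hKne)
      (Eventually.of_forall fun r => zero_le) ?_
    filter_upwards [Ioo_mem_nhdsGT_of_mem (by constructor <;> [exact le_rfl; exact hδ] :
      (0:ℝ) ∈ Set.Ico 0 δ)] with r hr
    obtain ⟨hr0, hrδ⟩ := hr
    have hptw : ∀ a ∈ closedBall b r,
        (ENNReal.ofReal (dist x y)) ^ u *
          ((ENNReal.ofReal (dist x a)) ^ (-s) * (ENNReal.ofReal (dist y a)) ^ (-t)) ≤
        ((ENNReal.ofReal (dist x y)) ^ u * ENNReal.ofReal (δ ^ (-s))) *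
          (ENNReal.ofReal (dist y a)) ^ (-t) := by
      intro a ha
      have hxa : δ ≤ dist x a := by
        have h1 := dist_triangle x a b
        rw [mem_closedBall] at ha
        have h2 : dist x b = 2 * δ := by rw [hδdef]; ring
        linarith
      have : (ENNReal.ofReal (dist x a)) ^ (-s) ≤ ENNReal.ofReal (δ ^ (-s)) := by
        rw [← ENNReal.ofReal_rpow_of_pos hδ]
        exact DLZ.rpow_le_rpow_neg (ENNReal.ofReal_le_ofReal hxa) (by linarith)
      calc (ENNReal.ofReal (dist x y)) ^ u *
          ((ENNReal.ofReal (dist x a)) ^ (-s) * (ENNReal.ofReal (dist y a)) ^ (-t))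
          ≤ (ENNReal.ofReal (dist x y)) ^ u *
            (ENNReal.ofReal (δ ^ (-s)) * (ENNReal.ofReal (dist y a)) ^ (-t)) :=
            mul_le_mul_right (mul_le_mul_left this _) _
        _ = ((ENNReal.ofReal (dist x y)) ^ u * ENNReal.ofReal (δ ^ (-s))) *
            (ENNReal.ofReal (dist y a)) ^ (-t) := by ring
    calc (ENNReal.ofReal (r ^ (s + t - u)) / ENNReal.ofReal (r ^ d)) *
        ∫⁻ a in closedBall b r, (ENNReal.ofReal (dist x y)) ^ u *
          ((ENNReal.ofReal (dist x a)) ^ (-s) * (ENNReal.ofReal (dist y a)) ^ (-t))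
        ≤ ENNReal.ofReal (r ^ ((s + t - u) - (d:ℝ))) *
          (((ENNReal.ofReal (dist x y)) ^ u * ENNReal.ofReal (δ ^ (-s))) *
            ∫⁻ a in closedBall b r, (ENNReal.ofReal (dist y a)) ^ (-t)) := by
          rw [DLZ.sigma_eq hr0, ← lintegral_const_mul' _ _ (ENNReal.mul_ne_top
            (ENNReal.rpow_ne_top_of_nonneg hu0.le ENNReal.ofReal_ne_top)
            ENNReal.ofReal_ne_top)]
          exact mul_le_mul_right (setLIntegral_mono' measurableSet_closedBall hptw) _
      _ ≤ ENNReal.ofReal (r ^ ((s + t - u) - (d:ℝ))) *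
          (((ENNReal.ofReal (dist x y)) ^ u * ENNReal.ofReal (δ ^ (-s))) *
            (Ct * ENNReal.ofReal (r ^ ((d:ℝ) - t)))) := by
          exact mul_le_mul_right (mul_le_mul_right (htsub y b r hr0) _) _
      _ = K * ENNReal.ofReal (r ^ (s - u)) := by
          rw [hK]
          rw [show ENNReal.ofReal (r ^ ((s + t - u) - (d:ℝ))) *
            ((ENNReal.ofReal (dist x y)) ^ u * ENNReal.ofReal (δ ^ (-s)) *
              (Ct * ENNReal.ofReal (r ^ ((d:ℝ) - t)))) =
            ((ENNReal.ofReal (dist x y)) ^ u * ENNReal.ofReal (δ ^ (-s)) * Ct) *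
              (ENNReal.ofReal (r ^ ((s + t - u) - (d:ℝ))) *
                ENNReal.ofReal (r ^ ((d:ℝ) - t))) by ring]
          congr 1
          rw [← ENNReal.ofReal_mul (by positivity), ← Real.rpow_add hr0]
          ring_nf


/-- if μ has compact support and no point mass at (b,b) (but may charge
the slices through b), s, t > 0, 0 < u < min(1,s,t), s+t-u < d, then for every ε > 0
the set E = {a : |a-b|^{s+t-u} ∫∫ |x-y|^u dμ(x,y)/(|x-a|^s |y-a|^t) ≥ ε}
has Lebesgue density zero at b. -/
theorem double_layer_density_zero (d : ℕ) (b : EuclideanSpace ℝ (Fin d))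
    (μ : Measure (EuclideanSpace ℝ (Fin d) × EuclideanSpace ℝ (Fin d))) [IsFiniteMeasure μ]
    (hK : ∃ K, IsCompact K ∧ μ Kᶜ = 0)
    (hbb : μ {(b, b)} = 0)
    (s t u : ℝ) (hs : 0 < s) (ht : 0 < t) (hu0 : 0 < u) (hu : u < min 1 (min s t))
    (hstd : s + t - u < d) (ε : ℝ) (hε : 0 < ε) :
    DensityZeroAt d
      {a | ENNReal.ofReal ε ≤ (ENNReal.ofReal (dist a b)) ^ (s + t - u) *
        doublePotential d s t u μ a} b := by
  have hust : u < min s t := lt_of_lt_of_le hu (min_le_right _ _)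
  have hus : u < s := hust.trans_le (min_le_left _ _)
  have hut : u < t := hust.trans_le (min_le_right _ _)
  have hα0 : 0 < s + t - u := by linarith
  obtain ⟨CB, hCB, hB⟩ := DLZ.B d s t u hu0 hus hut hstd
  have hεne : (ENNReal.ofReal ε) ≠ 0 := (ENNReal.ofReal_pos.mpr hε).ne'
  -- measurability of the kernel in all variables
  have mg : Measurable fun q : (EuclideanSpace ℝ (Fin d) × EuclideanSpace ℝ (Fin d)) ×
      EuclideanSpace ℝ (Fin d) =>
      (ENNReal.ofReal (dist q.1.1 q.1.2)) ^ u *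
        ((ENNReal.ofReal (dist q.1.1 q.2)) ^ (-s) * (ENNReal.ofReal (dist q.1.2 q.2)) ^ (-t)) := by
    refine Measurable.mul ?_ (Measurable.mul ?_ ?_)
    · exact ENNReal.continuous_rpow_const.measurable.comp (ENNReal.measurable_ofReal.comp
        (measurable_fst.fst.dist measurable_fst.snd))
    · exact ENNReal.continuous_rpow_const.measurable.comp (ENNReal.measurable_ofReal.comp
        (measurable_fst.fst.dist measurable_snd))
    · exact ENNReal.continuous_rpow_const.measurable.comp (ENNReal.measurable_ofReal.comp
        (measurable_fst.snd.dist measurable_snd))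
  have mg' : Measurable fun q : EuclideanSpace ℝ (Fin d) ×
      (EuclideanSpace ℝ (Fin d) × EuclideanSpace ℝ (Fin d)) =>
      (ENNReal.ofReal (dist q.2.1 q.2.2)) ^ u *
        ((ENNReal.ofReal (dist q.2.1 q.1)) ^ (-s) * (ENNReal.ofReal (dist q.2.2 q.1)) ^ (-t)) := by
    refine Measurable.mul ?_ (Measurable.mul ?_ ?_)
    · exact ENNReal.continuous_rpow_const.measurable.comp (ENNReal.measurable_ofReal.comp
        (measurable_snd.fst.dist measurable_snd.snd))
    · exact ENNReal.continuous_rpow_const.measurable.comp (ENNReal.measurable_ofReal.comp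
        (measurable_snd.fst.dist measurable_fst))
    · exact ENNReal.continuous_rpow_const.measurable.comp (ENNReal.measurable_ofReal.comp
        (measurable_snd.snd.dist measurable_fst))
  -- the double integral with inner variable in the ball, and the dominated family
  set G : ℝ → (EuclideanSpace ℝ (Fin d) × EuclideanSpace ℝ (Fin d)) → ℝ≥0∞ :=
    fun r p => ∫⁻ a in closedBall b r, (ENNReal.ofReal (dist p.1 p.2)) ^ u *
        ((ENNReal.ofReal (dist p.1 a)) ^ (-s) * (ENNReal.ofReal (dist p.2 a)) ^ (-t)) with hG
  set F : ℝ → (EuclideanSpace ℝ (Fin d) × EuclideanSpace ℝ (Fin d)) → ℝ≥0∞ :=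
    fun r p => (ENNReal.ofReal (r ^ (s + t - u)) / ENNReal.ofReal (r ^ d)) * G r p with hF
  have hDCT : Tendsto (fun r => ∫⁻ p, F r p ∂μ) (nhdsWithin 0 (Set.Ioi 0)) (nhds 0) := by
    have h0 : (0:ℝ≥0∞) = ∫⁻ _, (0:ℝ≥0∞) ∂μ := by simp
    rw [h0]
    refine tendsto_lintegral_filter_of_dominated_convergence (fun _ => CB) ?_ ?_ ?_ ?_
    · refine Eventually.of_forall fun r => ?_
      exact (Measurable.lintegral_prod_right' (f := fun q => _) mg).const_mul _
    · filter_upwards [self_mem_nhdsWithin] with r hr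
      refine Eventually.of_forall fun p => ?_
      have hr0 : (0:ℝ) < r := hr
      calc F r p ≤ (ENNReal.ofReal (r ^ (s + t - u)) / ENNReal.ofReal (r ^ d)) *
            (CB * ENNReal.ofReal (r ^ ((d:ℝ) - (s + t - u)))) :=
          mul_le_mul_right (hB b r hr0 p.1 p.2) _
        _ = CB * ((ENNReal.ofReal (r ^ (s + t - u)) / ENNReal.ofReal (r ^ d)) *
            ENNReal.ofReal (r ^ ((d:ℝ) - (s + t - u)))) := by ring
        _ = CB := by
            rw [DLZ.sigma_eq hr0, ← ENNReal.ofReal_mul (by positivity),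
              ← Real.rpow_add hr0]
            norm_num
    · rw [lintegral_const]
      exact ENNReal.mul_ne_top hCB (measure_ne_top μ _)
    · exact Eventually.of_forall fun p =>
        DLZ.decay d b s t u hs ht hu0 hus hut hstd p.1 p.2
  have hfinal : Tendsto (fun r => (ENNReal.ofReal ε)⁻¹ * ∫⁻ p, F r p ∂μ)
      (nhdsWithin 0 (Set.Ioi 0)) (nhds 0) := by
    simpa using ENNReal.Tendsto.const_mul hDCT
      (Or.inr (ENNReal.inv_ne_top.mpr hεne))
  unfold DensityZeroAt
  refine tendsto_of_tendsto_of_tendsto_of_le_of_le' tendsto_const_nhds hfinal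
    (Eventually.of_forall fun r => zero_le) ?_
  filter_upwards [self_mem_nhdsWithin] with r hr
  have hr0 : (0:ℝ) < r := hr
  -- Chebyshev + Tonelli
  have hmeasf : Measurable fun a : EuclideanSpace ℝ (Fin d) =>
      (ENNReal.ofReal (dist a b)) ^ (s + t - u) * doublePotential d s t u μ a := by
    refine Measurable.mul ?_ ?_
    · exact ENNReal.continuous_rpow_const.measurable.comp (ENNReal.measurable_ofReal.comp
        (measurable_id.dist measurable_const))
    · unfold doublePotential
      exact Measurable.lintegral_prod_right' (f := fun q => _) mg'
  have cheb := mul_meas_ge_le_lintegral₀ (μ := volume.restrict (closedBall b r))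
    hmeasf.aemeasurable (ENNReal.ofReal ε)
  rw [Measure.restrict_apply' measurableSet_closedBall] at cheb
  have step2 : ∫⁻ a in closedBall b r,
      (ENNReal.ofReal (dist a b)) ^ (s + t - u) * doublePotential d s t u μ a ≤
      ENNReal.ofReal (r ^ (s + t - u)) *
        ∫⁻ a in closedBall b r, doublePotential d s t u μ a := by
    rw [← lintegral_const_mul' _ _ ENNReal.ofReal_ne_top]
    refine setLIntegral_mono' measurableSet_closedBall fun a ha => ?_
    refine mul_le_mul_left ?_ _
    calc (ENNReal.ofReal (dist a b)) ^ (s + t - u)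
        ≤ (ENNReal.ofReal r) ^ (s + t - u) :=
          ENNReal.rpow_le_rpow (ENNReal.ofReal_le_ofReal (mem_closedBall.mp ha)) hα0.le
      _ = ENNReal.ofReal (r ^ (s + t - u)) := ENNReal.ofReal_rpow_of_pos hr0
  have fub : ∫⁻ a in closedBall b r, doublePotential d s t u μ a =
      ∫⁻ p, G r p ∂μ := by
    unfold doublePotential
    rw [hG]
    exact lintegral_lintegral_swap mg'.aemeasurable
  have key : ENNReal.ofReal ε * volume
      ({a | ENNReal.ofReal ε ≤ (ENNReal.ofReal (dist a b)) ^ (s + t - u) *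
        doublePotential d s t u μ a} ∩ closedBall b r) ≤
      ENNReal.ofReal (r ^ (s + t - u)) * ∫⁻ p, G r p ∂μ := by
    rw [← fub]
    exact le_trans cheb step2
  have hFr : ∫⁻ p, F r p ∂μ =
      (ENNReal.ofReal (r ^ (s + t - u)) / ENNReal.ofReal (r ^ d)) * ∫⁻ p, G r p ∂μ := by
    rw [hF]
    refine lintegral_const_mul' _ _ ?_
    refine (ENNReal.div_lt_top ENNReal.ofReal_ne_top ?_).ne
    simp only [ne_eq, ENNReal.ofReal_eq_zero, not_le]
    positivity
  have hvol : volume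
      ({a | ENNReal.ofReal ε ≤ (ENNReal.ofReal (dist a b)) ^ (s + t - u) *
        doublePotential d s t u μ a} ∩ closedBall b r) ≤
      (ENNReal.ofReal ε)⁻¹ * (ENNReal.ofReal (r ^ (s + t - u)) * ∫⁻ p, G r p ∂μ) := by
    rw [← one_mul (volume _), ← ENNReal.inv_mul_cancel hεne ENNReal.ofReal_ne_top, mul_assoc]
    exact mul_le_mul_right key _
  refine le_trans (ENNReal.div_le_div_right hvol _) (le_of_eq ?_)
  rw [hFr, div_eq_mul_inv, div_eq_mul_inv]
  ring
end

section
/- Let X ⊆ ℂ be compact, b ∈ X, 0 < α < 1, and let μ be a complex measure on X × X with no mass on the diagonal. Then there exists a complex measure μ' on X × X, with no mass on the diagonal and no mass on the vertical slice {b} × X, such that L(μ') = L(μ) as functionals on lip α, where L(ν)(f) = ∫∫ (f(z)-f(w))/|z-w|^α dν(z,w). -/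
open MeasureTheory Metric Filter ENNReal
open Topology NNReal

/-- `f` is a bounded little-Lipschitz-α function on ℂ. -/
def LipAlpha (α : ℝ) (f : ℂ → ℂ) : Prop :=
  (∃ C, ∀ z, ‖f z‖ ≤ C) ∧
  (∃ C, ∀ z w, ‖f z - f w‖ ≤ C * ‖z - w‖ ^ α) ∧
  (∀ ε > 0, ∃ δ > 0, ∀ z w, ‖z - w‖ < δ → ‖f z - f w‖ ≤ ε * ‖z - w‖ ^ α)

lemma lipAlpha_continuous {α : ℝ} (hα0 : 0 < α) {f : ℂ → ℂ} (hf : LipAlpha α f) :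
    Continuous f := by
  obtain ⟨-, ⟨C, hC⟩, -⟩ := hf
  rw [continuous_iff_continuousAt]
  intro z
  have hden : Tendsto (fun w : ℂ => |C| * ‖w - z‖ ^ α) (𝓝 z) (𝓝 (|C| * ‖z - z‖ ^ α)) := by
    exact (((Real.continuousAt_rpow_const _ _ (Or.inr hα0.le)).comp
      ((continuous_id.sub continuous_const).norm.continuousAt)).const_smul |C|)
  have h0 : Tendsto (fun w : ℂ => |C| * ‖w - z‖ ^ α) (𝓝 z) (𝓝 0) := by
    simpa [Real.zero_rpow hα0.ne'] using hden
  have hlim : Tendsto (fun w => ‖f w - f z‖) (𝓝 z) (𝓝 0) := by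
    refine squeeze_zero (fun w => norm_nonneg _) (fun w => ?_) h0
    exact (hC w z).trans (mul_le_mul_of_nonneg_right (le_abs_self C)
      (Real.rpow_nonneg (norm_nonneg _) α))
  exact tendsto_iff_norm_sub_tendsto_zero.2 hlim

/-- a complex measure μ on X × X with no mass on the diagonal
(encoded by its total variation σ and unimodular density h) can be replaced by a
measure μ'\'' (encoded by σ'\'', h'\'') with no mass on the diagonal and none on the
vertical slice {b} × X, inducing the same functional L on lip α. -/
theorem avoid_vertical_slice (α : ℝ) (hα0 : 0 < α) (hα1 : α < 1)
    (X : Set ℂ) (hX : IsCompact X) (b : ℂ) (hb : b ∈ X)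
    (σ : Measure (ℂ × ℂ)) [IsFiniteMeasure σ] (hsupp : σ ((X ×ˢ X)ᶜ) = 0)
    (h : ℂ × ℂ → ℂ) (hmeas : Measurable h) (hone : ∀ p, ‖h p‖ = 1)
    (hdiag : σ {p : ℂ × ℂ | p.1 = p.2} = 0) :
    ∃ (σ' : Measure (ℂ × ℂ)) (_ : IsFiniteMeasure σ') (h' : ℂ × ℂ → ℂ),
      Measurable h' ∧ (∀ p, ‖h' p‖ = 1) ∧
      σ' ((X ×ˢ X)ᶜ) = 0 ∧
      σ' {p : ℂ × ℂ | p.1 = p.2} = 0 ∧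
      σ' {p : ℂ × ℂ | p.1 = b} = 0 ∧
      ∀ f : ℂ → ℂ, LipAlpha α f →
        ∫ p : ℂ × ℂ, ((f p.1 - f p.2) / (‖p.1 - p.2‖ ^ α : ℝ)) * h p ∂σ =
        ∫ p : ℂ × ℂ, ((f p.1 - f p.2) / (‖p.1 - p.2‖ ^ α : ℝ)) * h' p ∂σ' := by
  classical
  have hSmeas : MeasurableSet {p : ℂ × ℂ | p.1 = b} :=
    measurable_fst (measurableSet_singleton b)
  set S : Set (ℂ × ℂ) := {p : ℂ × ℂ | p.1 = b} with hS_def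
  set ν₁ : Measure (ℂ × ℂ) := σ.restrict Sᶜ with hν₁
  set ν₂ : Measure (ℂ × ℂ) := (σ.restrict S).map Prod.swap with hν₂
  haveI hfin2 : IsFiniteMeasure ν₂ := by
    refine ⟨?_⟩
    rw [hν₂, Measure.map_apply measurable_swap MeasurableSet.univ]
    exact measure_lt_top _ _
  set τ : Measure (ℂ × ℂ) := ν₁ + ν₂ with hτ
  haveI : IsFiniteMeasure τ := by rw [hτ]; infer_instance
  have h1τ : ν₁ ≪ τ := Measure.absolutelyContinuous_of_le (Measure.le_add_right le_rfl)
  have h2τ : ν₂ ≪ τ := Measure.absolutelyContinuous_of_le (Measure.le_add_left le_rfl)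
  set r₁ : ℂ × ℂ → ℝ := fun p => (ν₁.rnDeriv τ p).toReal with hr₁
  set r₂ : ℂ × ℂ → ℝ := fun p => (ν₂.rnDeriv τ p).toReal with hr₂
  have hr₁m : Measurable r₁ := (Measure.measurable_rnDeriv _ _).ennreal_toReal
  have hr₂m : Measurable r₂ := (Measure.measurable_rnDeriv _ _).ennreal_toReal
  have hr₁0 : ∀ p, 0 ≤ r₁ p := fun p => ENNReal.toReal_nonneg
  have hr₂0 : ∀ p, 0 ≤ r₂ p := fun p => ENNReal.toReal_nonneg
  set d : ℂ × ℂ → ℂ := fun p => r₁ p • h p - r₂ p • h p.swap with hd_def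
  have hdm : Measurable d :=
    (hr₁m.smul hmeas).sub (hr₂m.smul (hmeas.comp measurable_swap))
  have hdnorm : ∀ p, ‖d p‖ ≤ r₁ p + r₂ p := by
    intro p
    refine (norm_sub_le _ _).trans ?_
    rw [norm_smul, norm_smul, hone, hone, mul_one, mul_one,
      Real.norm_eq_abs, Real.norm_eq_abs, abs_of_nonneg (hr₁0 p), abs_of_nonneg (hr₂0 p)]
  set h' : ℂ × ℂ → ℂ := fun p => if d p = 0 then 1 else d p / (‖d p‖ : ℝ) with hh'_def
  have hh'm : Measurable h' := by
    refine Measurable.ite (hdm (measurableSet_singleton 0)) measurable_const ?_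
    exact hdm.div (Complex.measurable_ofReal.comp hdm.norm)
  have hh'one : ∀ p, ‖h' p‖ = 1 := by
    intro p
    by_cases hp : d p = 0
    · simp [hh'_def, hp]
    · simp [hh'_def, hp, norm_div, Complex.norm_real, abs_norm,
        div_self (norm_ne_zero_iff.mpr hp)]
  have hsmul_d : ∀ p, (‖d p‖ : ℝ) • h' p = d p := by
    intro p
    by_cases hp : d p = 0
    · simp [hh'_def, hp]
    · have hne : ((‖d p‖ : ℝ) : ℂ) ≠ 0 := by
        exact_mod_cast (norm_ne_zero_iff.mpr hp)
      simp only [hh'_def, hp, if_false, Complex.real_smul]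
      rw [mul_comm, div_mul_cancel₀ _ hne]
  set σ' : Measure (ℂ × ℂ) := τ.withDensity fun p => ((‖d p‖₊ : ℝ≥0) : ℝ≥0∞) with hσ'_def
  have hσ'τ : σ' ≪ τ := withDensity_absolutelyContinuous _ _
  haveI hσ'fin : IsFiniteMeasure σ' := by
    refine ⟨?_⟩
    rw [hσ'_def, withDensity_apply _ MeasurableSet.univ, Measure.restrict_univ]
    have hle : ∀ p, ((‖d p‖₊ : ℝ≥0) : ℝ≥0∞) ≤ ν₁.rnDeriv τ p + ν₂.rnDeriv τ p := by
      intro p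
      calc ((‖d p‖₊ : ℝ≥0) : ℝ≥0∞) = ENNReal.ofReal ‖d p‖ := by
            rw [ofReal_norm, enorm_eq_nnnorm]
        _ ≤ ENNReal.ofReal (r₁ p + r₂ p) := ENNReal.ofReal_le_ofReal (hdnorm p)
        _ ≤ ENNReal.ofReal (r₁ p) + ENNReal.ofReal (r₂ p) := ENNReal.ofReal_add_le
        _ ≤ ν₁.rnDeriv τ p + ν₂.rnDeriv τ p :=
            add_le_add ENNReal.ofReal_toReal_le ENNReal.ofReal_toReal_le
    calc ∫⁻ p, ((‖d p‖₊ : ℝ≥0) : ℝ≥0∞) ∂τ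
        ≤ ∫⁻ p, (ν₁.rnDeriv τ p + ν₂.rnDeriv τ p) ∂τ := lintegral_mono hle
      _ = (∫⁻ p, ν₁.rnDeriv τ p ∂τ) + ∫⁻ p, ν₂.rnDeriv τ p ∂τ :=
          lintegral_add_left (Measure.measurable_rnDeriv _ _) _
      _ ≤ ν₁ Set.univ + ν₂ Set.univ :=
          add_le_add (Measure.lintegral_rnDeriv_le) (Measure.lintegral_rnDeriv_le)
      _ < ⊤ := ENNReal.add_lt_top.2 ⟨measure_lt_top _ _, measure_lt_top _ _⟩
  have hτnull : ∀ A : Set (ℂ × ℂ), MeasurableSet A → σ (A ∩ Sᶜ) = 0 →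
      σ (Prod.swap ⁻¹' A ∩ S) = 0 → τ A = 0 := by
    intro A hA h1 h2
    rw [hτ, Measure.add_apply, hν₁, hν₂, Measure.restrict_apply hA,
      Measure.map_apply measurable_swap hA, Measure.restrict_apply (measurable_swap hA),
      h1, h2, add_zero]
  have hXmeas : MeasurableSet (X ×ˢ X) :=
    (hX.isClosed.measurableSet).prod (hX.isClosed.measurableSet)
  have hσ'supp : σ' ((X ×ˢ X)ᶜ) = 0 := by
    refine hσ'τ (hτnull _ hXmeas.compl (measure_mono_null Set.inter_subset_left hsupp) ?_)
    have hswap : Prod.swap ⁻¹' (X ×ˢ X)ᶜ = (X ×ˢ X)ᶜ := by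
      ext p; simp [Set.mem_prod, and_comm]
    rw [hswap]
    exact measure_mono_null Set.inter_subset_left hsupp
  have hDmeas : MeasurableSet {p : ℂ × ℂ | p.1 = p.2} :=
    measurableSet_eq_fun measurable_fst measurable_snd
  have hσ'diag : σ' {p : ℂ × ℂ | p.1 = p.2} = 0 := by
    refine hσ'τ (hτnull _ hDmeas (measure_mono_null Set.inter_subset_left hdiag) ?_)
    refine measure_mono_null ?_ hdiag
    intro p hp
    exact hp.1.symm
  have hσ'slice : σ' S = 0 := by
    refine hσ'τ (hτnull _ hSmeas ?_ ?_)
    · rw [Set.inter_compl_self, measure_empty]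
    · refine measure_mono_null ?_ hdiag
      rintro p ⟨hp1, hp2⟩
      simp only [Set.mem_preimage, Set.mem_setOf_eq] at hp1 hp2 ⊢
      rw [hp2, ← hp1]; rfl
  refine ⟨σ', hσ'fin, h', hh'm, hh'one, hσ'supp, hσ'diag, hσ'slice, ?_⟩
  intro f hf
  obtain ⟨C, hC⟩ := hf.2.1
  set g : ℂ × ℂ → ℂ := fun p => (f p.1 - f p.2) / ((‖p.1 - p.2‖ ^ α : ℝ) : ℂ) with hg_def
  have hfc : Continuous f := lipAlpha_continuous hα0 hf
  have hdenc : Continuous fun p : ℂ × ℂ => ‖p.1 - p.2‖ ^ α := by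
    rw [continuous_iff_continuousAt]
    intro p
    exact (Real.continuousAt_rpow_const _ _ (Or.inr hα0.le)).comp
      ((continuous_fst.sub continuous_snd).norm.continuousAt)
  have hgm : Measurable g :=
    ((hfc.comp continuous_fst).sub (hfc.comp continuous_snd)).measurable.div
      (Complex.measurable_ofReal.comp hdenc.measurable)
  have hgb : ∀ p, ‖g p‖ ≤ |C| := by
    intro p
    rcases eq_or_lt_of_le (Real.rpow_nonneg (norm_nonneg (p.1 - p.2)) α) with hc | hc
    · have h0 : g p = 0 := by
        show (f p.1 - f p.2) / ((‖p.1 - p.2‖ ^ α : ℝ) : ℂ) = 0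
        rw [← hc, Complex.ofReal_zero, _root_.div_zero]
      rw [h0, norm_zero]
      exact abs_nonneg C
    · rw [hg_def]
      simp only [norm_div, Complex.norm_real, Real.norm_eq_abs, abs_of_pos hc]
      rw [div_le_iff₀ hc]
      exact (hC p.1 p.2).trans (mul_le_mul_of_nonneg_right (le_abs_self C) hc.le)
  have hg_swap : ∀ p : ℂ × ℂ, g p.swap = -g p := by
    intro p
    simp only [hg_def, Prod.fst_swap, Prod.snd_swap]
    rw [norm_sub_rev, ← neg_sub (f p.1), neg_div]
  have hint : ∀ (μ : Measure (ℂ × ℂ)) [IsFiniteMeasure μ] (k : ℂ × ℂ → ℂ),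
      Measurable k → (∀ p, ‖k p‖ ≤ 1) → Integrable (fun p => g p * k p) μ := by
    intro μ _ k hk hk1
    refine (integrable_const |C|).mono' (hgm.mul hk).aestronglyMeasurable
      (ae_of_all _ fun p => ?_)
    rw [norm_mul]
    calc ‖g p‖ * ‖k p‖ ≤ |C| * 1 :=
        mul_le_mul (hgb p) (hk1 p) (norm_nonneg _) (abs_nonneg C)
      _ = |C| := mul_one _
  have hintA : Integrable (fun p => r₁ p • (g p * h p)) τ := by
    refine ((Measure.integrable_toReal_rnDeriv (μ := ν₁) (ν := τ)).const_mul |C|).mono'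
      (hr₁m.smul (hgm.mul hmeas)).aestronglyMeasurable (ae_of_all _ fun p => ?_)
    rw [norm_smul, Real.norm_eq_abs, abs_of_nonneg (hr₁0 p), norm_mul, hone, mul_one,
      mul_comm (|C|)]
    exact mul_le_mul_of_nonneg_left (hgb p) (hr₁0 p)
  have hintB : Integrable (fun p => r₂ p • (g p * (-(h p.swap)))) τ := by
    refine ((Measure.integrable_toReal_rnDeriv (μ := ν₂) (ν := τ)).const_mul |C|).mono'
      (hr₂m.smul (hgm.mul (hmeas.comp measurable_swap).neg)).aestronglyMeasurable
      (ae_of_all _ fun p => ?_)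
    rw [norm_smul, Real.norm_eq_abs, abs_of_nonneg (hr₂0 p), norm_mul, norm_neg, hone, mul_one,
      mul_comm (|C|)]
    exact mul_le_mul_of_nonneg_left (hgb p) (hr₂0 p)
  calc ∫ p, g p * h p ∂σ
      = ∫ p, g p * h p ∂ν₁ + ∫ p, g p * h p ∂(σ.restrict S) := by
        rw [← integral_add_measure (hint ν₁ h hmeas (fun p => (hone p).le))
          (hint (σ.restrict S) h hmeas (fun p => (hone p).le)),
          hν₁, Measure.restrict_compl_add_restrict hSmeas]
    _ = ∫ p, g p * h p ∂ν₁ + ∫ q, g q * (-(h q.swap)) ∂ν₂ := by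
        congr 1
        have hFm : Measurable fun q : ℂ × ℂ => g q * (-(h q.swap)) :=
          hgm.mul ((hmeas.comp measurable_swap).neg)
        rw [hν₂, integral_map measurable_swap.aemeasurable hFm.aestronglyMeasurable]
        refine integral_congr_ae (ae_of_all _ fun p => ?_)
        simp only [Prod.swap_swap, hg_swap p]
        ring
    _ = ∫ p, r₁ p • (g p * h p) ∂τ + ∫ p, r₂ p • (g p * (-(h p.swap))) ∂τ := by
        haveI : IsFiniteMeasure ν₁ := by rw [hν₁]; infer_instance
        haveI : ν₁.HaveLebesgueDecomposition τ := Measure.haveLebesgueDecomposition_of_finiteMeasure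
        haveI : ν₂.HaveLebesgueDecomposition τ := Measure.haveLebesgueDecomposition_of_finiteMeasure
        rw [integral_rnDeriv_smul h1τ, integral_rnDeriv_smul h2τ]
    _ = ∫ p, g p * d p ∂τ := by
        rw [← integral_add hintA hintB]
        refine integral_congr_ae (ae_of_all _ fun p => ?_)
        simp only [hd_def, Complex.real_smul, smul_eq_mul]
        ring
    _ = ∫ p, g p * h' p ∂σ' := by
        rw [hσ'_def, integral_withDensity_eq_integral_smul hdm.nnnorm (fun p => g p * h' p)]
        refine integral_congr_ae (ae_of_all _ fun p => ?_)
        show g p * d p = ‖d p‖₊ • (g p * h' p)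
        rw [NNReal.smul_def, coe_nnnorm, ← mul_smul_comm, hsmul_d p]
end
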